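/- arXiv:1404.3339 — 2 statements merged into one kernel-verified Lean document; each statement's English description precedes it below -/
import Mathlib

section
/- Suppose P is the Kantor pair enveloped by a 5-graded Lie algebra L. Then the Lie subalgebra ⟨T_L(P)⟩ of L generated by T_L(P) is a graded (with respect to the 5-grading) ideal of L that envelops P; moreover ⟨T_L(P)⟩ = [T_L(P), T_L(P)] ⊕ T_L(P) as modules, and [T_L(P), T_L(P)] = [L₋₁,L₋₁] ⊕ [L₋₁,L₁] ⊕ [L₁,L₁]. -/
/-- A Kantor pair over `K`: a pair of modules `(Pm, Pp)` (for `P⁻`, `P⁺`) with trilinear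
products `tm : P⁻ × P⁺ × P⁻ → P⁻` and `tp : P⁺ × P⁻ × P⁺ → P⁺` satisfying the Kantor
identities (K1) and (K2). -/
structure KantorPair (K : Type*) [CommRing K] (Pm Pp : Type*)
    [AddCommGroup Pm] [AddCommGroup Pp] [Module K Pm] [Module K Pp] where
  tm : Pm → Pp → Pm → Pm
  tp : Pp → Pm → Pp → Pp
  tm_add₁ : ∀ x x' y z, tm (x + x') y z = tm x y z + tm x' y z
  tm_smul₁ : ∀ (a : K) x y z, tm (a • x) y z = a • tm x y z
  tm_add₂ : ∀ x y y' z, tm x (y + y') z = tm x y z + tm x y' z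
  tm_smul₂ : ∀ (a : K) x y z, tm x (a • y) z = a • tm x y z
  tm_add₃ : ∀ x y z z', tm x y (z + z') = tm x y z + tm x y z'
  tm_smul₃ : ∀ (a : K) x y z, tm x y (a • z) = a • tm x y z
  tp_add₁ : ∀ x x' y z, tp (x + x') y z = tp x y z + tp x' y z
  tp_smul₁ : ∀ (a : K) x y z, tp (a • x) y z = a • tp x y z
  tp_add₂ : ∀ x y y' z, tp x (y + y') z = tp x y z + tp x y' z
  tp_smul₂ : ∀ (a : K) x y z, tp x (a • y) z = a • tp x y z
  tp_add₃ : ∀ x y z z', tp x y (z + z') = tp x y z + tp x y z'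
  tp_smul₃ : ∀ (a : K) x y z, tp x y (a • z) = a • tp x y z
  k1m : ∀ (x z u : Pm) (y w : Pp),
    tm x y (tm z w u) - tm z w (tm x y u) = tm (tm x y z) w u - tm z (tp y x w) u
  k1p : ∀ (x z u : Pp) (y w : Pm),
    tp x y (tp z w u) - tp z w (tp x y u) = tp (tp x y z) w u - tp z (tm y x w) u
  k2m : ∀ (x z u : Pm) (w v : Pp),
    (tm x (tp w u v) z - tm z (tp w u v) x) + tm u w (tm x v z - tm z v x)
      = tm (tm x w z - tm z w x) v u - tm u v (tm x w z - tm z w x)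
  k2p : ∀ (x z u : Pp) (w v : Pm),
    (tp x (tm w u v) z - tp z (tm w u v) x) + tp u w (tp x v z - tp z v x)
      = tp (tp x w z - tp z w x) v u - tp u v (tp x w z - tp z w x)

namespace KantorPair

variable {K : Type*} [CommRing K] {Pm Pp : Type*}
  [AddCommGroup Pm] [AddCommGroup Pp] [Module K Pm] [Module K Pp]

/-- `Q = (Qm, Qp)` is an ideal of the Kantor pair:
`{P,P,Q} + {P,Q,P} + {Q,P,P} ⊆ Q` on each side. -/
def IsIdealPair (KP : KantorPair K Pm Pp) (Qm : Submodule K Pm) (Qp : Submodule K Pp) : Prop :=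
  (∀ (x z : Pm) (y : Pp) (q : Pm), q ∈ Qm → KP.tm x y q ∈ Qm ∧ KP.tm q y z ∈ Qm) ∧
  (∀ (x z : Pm) (r : Pp), r ∈ Qp → KP.tm x r z ∈ Qm) ∧
  (∀ (x z : Pp) (y : Pm) (q : Pp), q ∈ Qp → KP.tp x y q ∈ Qp ∧ KP.tp q y z ∈ Qp) ∧
  (∀ (x z : Pp) (r : Pm), r ∈ Qm → KP.tp x r z ∈ Qp)

/-- A Kantor pair is simple if some product is nonzero and its only ideals are `0` and `P`. -/
def IsSimplePair (KP : KantorPair K Pm Pp) : Prop :=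
  ((∃ x y z, KP.tm x y z ≠ 0) ∨ (∃ x y z, KP.tp x y z ≠ 0)) ∧
  ∀ Qm Qp, KP.IsIdealPair Qm Qp → (Qm = ⊥ ∧ Qp = ⊥) ∨ (Qm = ⊤ ∧ Qp = ⊤)

/-- `(ωm, ωp)` belongs to the centroid of the Kantor pair. -/
def InCentroid (KP : KantorPair K Pm Pp) (ωm : Pm →ₗ[K] Pm) (ωp : Pp →ₗ[K] Pp) : Prop :=
  (∀ x y z, ωm (KP.tm x y z) = KP.tm (ωm x) y z ∧
      ωm (KP.tm x y z) = KP.tm x (ωp y) z ∧ ωm (KP.tm x y z) = KP.tm x y (ωm z)) ∧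
  (∀ x y z, ωp (KP.tp x y z) = KP.tp (ωp x) y z ∧
      ωp (KP.tp x y z) = KP.tp x (ωm y) z ∧ ωp (KP.tp x y z) = KP.tp x y (ωp z))

/-- The Kantor pair is central: `a ↦ (a • id, a • id)` is an isomorphism of `K`
onto the centroid. -/
def IsCentralPair (KP : KantorPair K Pm Pp) : Prop :=
  (∀ ωm ωp, KP.InCentroid ωm ωp →
    ∃ a : K, ωm = a • (LinearMap.id : Pm →ₗ[K] Pm) ∧ ωp = a • (LinearMap.id : Pp →ₗ[K] Pp)) ∧
  ∀ a : K, a • (LinearMap.id : Pm →ₗ[K] Pm) = 0 →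
    a • (LinearMap.id : Pp →ₗ[K] Pp) = 0 → a = 0

/-- A Jordan pair is a Kantor pair with vanishing K-operators, i.e. symmetric products. -/
def IsJordanPair (KP : KantorPair K Pm Pp) : Prop :=
  (∀ (x z : Pm) (y : Pp), KP.tm x y z = KP.tm z y x) ∧
  (∀ (x z : Pp) (y : Pm), KP.tp x y z = KP.tp z y x)

end KantorPair

/-- A 5-grading (= BC₁-grading) of a Lie algebra `L` over `K`:
an internal direct sum decomposition `L = ⊕_{i ∈ ℤ} L_i` with `⁅L_i, L_j⁆ ⊆ L_{i+j}`
and `L_i = 0` for `|i| > 2`. -/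
structure FiveGrading (K : Type*) [CommRing K] (L : Type*) [LieRing L] [LieAlgebra K L] where
  g : ℤ → Submodule K L
  internal : DirectSum.IsInternal g
  lie_mem : ∀ (i j : ℤ) (x y : L), x ∈ g i → y ∈ g j → ⁅x, y⁆ ∈ g (i + j)
  vanish : ∀ i : ℤ, 2 < |i| → g i = ⊥

/-- `T_L(P) = L_{-1} ⊕ L_1` as a submodule of `L`. -/
def Tsub {K : Type*} [CommRing K] {L : Type*} [LieRing L] [LieAlgebra K L]
    (fg : FiveGrading K L) : Submodule K L :=
  fg.g (-1) ⊔ fg.g 1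

/-- The span of all brackets `⁅x, y⁆` with `x ∈ U`, `y ∈ V`. -/
def brkSpan (K : Type*) [CommRing K] {L : Type*} [LieRing L] [LieAlgebra K L]
    (U V : Submodule K L) : Submodule K L :=
  Submodule.span K {w : L | ∃ x ∈ U, ∃ y ∈ V, w = ⁅x, y⁆}

/-- A 5-graded Lie algebra `L` tightly envelops the Kantor pair `(L_{-1}, L_1)` if it
is generated as a Lie algebra by `T = L_{-1} ⊕ L_1` and `Z(L) ∩ [T, T] = 0`. -/
def Tight (K : Type*) [CommRing K] {L : Type*} [LieRing L] [LieAlgebra K L]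
    (fg : FiveGrading K L) : Prop :=
  LieSubalgebra.lieSpan K L ↑(Tsub fg) = ⊤ ∧
  ∀ z ∈ brkSpan K (Tsub fg) (Tsub fg), (∀ u : L, ⁅z, u⁆ = 0) → z = 0

/-- A 5-graded Lie algebra `(L, fg)` envelops a Kantor pair `KP`: there are identifications
of `P⁻` with `L_{-1}` and `P⁺` with `L_1` under which the products of `KP` are the products
`⁅⁅x, y⁆, z⁆` of `L`. -/
structure Envelops {K : Type*} [CommRing K] {Pm Pp : Type*}
    [AddCommGroup Pm] [AddCommGroup Pp] [Module K Pm] [Module K Pp]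
    (KP : KantorPair K Pm Pp)
    {L : Type*} [LieRing L] [LieAlgebra K L] (fg : FiveGrading K L) where
  em : Pm →ₗ[K] L
  ep : Pp →ₗ[K] L
  inj_m : Function.Injective em
  inj_p : Function.Injective ep
  range_m : LinearMap.range em = fg.g (-1)
  range_p : LinearMap.range ep = fg.g 1
  compat_m : ∀ (x z : Pm) (y : Pp), em (KP.tm x y z) = ⁅⁅em x, ep y⁆, em z⁆
  compat_p : ∀ (x z : Pp) (y : Pm), ep (KP.tp x y z) = ⁅⁅ep x, em y⁆, ep z⁆

/-- A short Peirce grading (SP-grading) of a Kantor pair: a `ℤ`-grading with support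
contained in `{0, 1}`. -/
structure SPGrading {K : Type*} [CommRing K] {Pm Pp : Type*}
    [AddCommGroup Pm] [AddCommGroup Pp] [Module K Pm] [Module K Pp]
    (KP : KantorPair K Pm Pp) where
  Qm : ℤ → Submodule K Pm
  Qp : ℤ → Submodule K Pp
  sup_m : Qm 0 ⊔ Qm 1 = ⊤
  disj_m : Disjoint (Qm 0) (Qm 1)
  sup_p : Qp 0 ⊔ Qp 1 = ⊤
  disj_p : Disjoint (Qp 0) (Qp 1)
  vanish_m : ∀ i : ℤ, i ≠ 0 → i ≠ 1 → Qm i = ⊥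
  vanish_p : ∀ i : ℤ, i ≠ 0 → i ≠ 1 → Qp i = ⊥
  grade_m : ∀ (i j k : ℤ) (x : Pm) (y : Pp) (z : Pm),
    x ∈ Qm i → y ∈ Qp j → z ∈ Qm k → KP.tm x y z ∈ Qm (i - j + k)
  grade_p : ∀ (i j k : ℤ) (x : Pp) (y : Pm) (z : Pp),
    x ∈ Qp i → y ∈ Qm j → z ∈ Qp k → KP.tp x y z ∈ Qp (i - j + k)

/-- `KPc` is the reflection `P̌` of the SP-graded Kantor pair `(KP, SP)`:
`P̌^σ = P₀^{-σ} ⊕ P₁^σ`, with products given by the reflection formula. -/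
def IsReflection {K : Type*} [CommRing K] {Pm Pp : Type*}
    [AddCommGroup Pm] [AddCommGroup Pp] [Module K Pm] [Module K Pp]
    (KP : KantorPair K Pm Pp) (SP : SPGrading KP)
    (KPc : KantorPair K ((SP.Qp 0) × (SP.Qm 1)) ((SP.Qm 0) × (SP.Qp 1))) : Prop :=
  (∀ (a c : (SP.Qm 0) × (SP.Qp 1)) (b : (SP.Qp 0) × (SP.Qm 1)),
    ((KPc.tp a b c).1 : Pm)
      = KP.tm a.1 b.1 c.1 - KP.tm b.2 a.2 c.1 + (KP.tm a.1 c.2 b.2 - KP.tm b.2 c.2 a.1) ∧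
    ((KPc.tp a b c).2 : Pp)
      = KP.tp a.2 b.2 c.2 - KP.tp b.1 a.1 c.2 + (KP.tp a.2 c.1 b.1 - KP.tp b.1 c.1 a.2)) ∧
  (∀ (a c : (SP.Qp 0) × (SP.Qm 1)) (b : (SP.Qm 0) × (SP.Qp 1)),
    ((KPc.tm a b c).1 : Pp)
      = KP.tp a.1 b.1 c.1 - KP.tp b.2 a.2 c.1 + (KP.tp a.1 c.2 b.2 - KP.tp b.2 c.2 a.1) ∧
    ((KPc.tm a b c).2 : Pm)
      = KP.tm a.2 b.2 c.2 - KP.tm b.1 a.1 c.2 + (KP.tm a.2 c.1 b.1 - KP.tm b.1 c.1 a.2))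


section Statement1Aux

set_option synthInstance.maxHeartbeats 1000000
set_option maxHeartbeats 1000000

open DirectSum

variable {K : Type*} [CommRing K] {L : Type*} [LieRing L] [LieAlgebra K L]

private noncomputable def projEquiv (fg : FiveGrading K L) : (⨁ i, fg.g i) ≃+ L :=
  AddEquiv.ofBijective (DirectSum.coeAddMonoidHom fg.g) fg.internal

private noncomputable def proj (fg : FiveGrading K L) (j : ℤ) (x : L) : L :=
  (((projEquiv fg).symm x) j : L)

private lemma proj_add (fg : FiveGrading K L) (j : ℤ) (x y : L) :
    proj fg j (x + y) = proj fg j x + proj fg j y := by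
  simp [proj, map_add, DirectSum.add_apply]

private lemma proj_zero (fg : FiveGrading K L) (j : ℤ) : proj fg j 0 = 0 := by
  simp [proj, map_zero]

private lemma symm_of_mem (fg : FiveGrading K L) {i : ℤ} {x : L} (hx : x ∈ fg.g i) :
    (projEquiv fg).symm x = DirectSum.of (fun i => fg.g i) i ⟨x, hx⟩ := by
  rw [AddEquiv.symm_apply_eq]
  exact (DirectSum.coeAddMonoidHom_of fg.g i ⟨x, hx⟩).symm

private lemma proj_of_mem_ne (fg : FiveGrading K L) {i j : ℤ} (hij : j ≠ i) {x : L}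
    (hx : x ∈ fg.g i) : proj fg j x = 0 := by
  rw [proj, symm_of_mem fg hx, DirectSum.of_eq_of_ne _ _ _ hij]
  rfl

private lemma eq_zero_of_proj (fg : FiveGrading K L) {x : L}
    (h : ∀ j, proj fg j x = 0) : x = 0 := by
  have h0 : (projEquiv fg).symm x = 0 := by
    refine DFinsupp.ext fun j => ?_
    exact Subtype.ext_iff.mpr (h j)
  have := congrArg (projEquiv fg) h0
  rwa [AddEquiv.apply_symm_apply, map_zero] at this

private lemma proj_biSup_eq_zero (fg : FiveGrading K L) (s : Set ℤ) {x : L}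
    (hx : x ∈ ⨆ i ∈ s, fg.g i) {j : ℤ} (hj : j ∉ s) : proj fg j x = 0 := by
  rw [iSup_subtype'] at hx
  refine Submodule.iSup_induction (motive := fun x => proj fg j x = 0) _ hx ?_ (proj_zero fg j) ?_
  · rintro ⟨i, hi⟩ y hy
    refine proj_of_mem_ne fg ?_ hy
    rintro rfl
    exact hj hi
  · intro a b ha hb
    rw [proj_add, ha, hb, add_zero]

private lemma disjoint_biSup (fg : FiveGrading K L) (s t : Set ℤ)
    (hst : ∀ i, i ∈ s → i ∉ t) :
    Disjoint (⨆ i ∈ s, fg.g i) (⨆ i ∈ t, fg.g i) := by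
  rw [Submodule.disjoint_def]
  intro x hxs hxt
  refine eq_zero_of_proj fg fun j => ?_
  by_cases h : j ∈ s
  · exact proj_biSup_eq_zero fg t hxt (hst j h)
  · exact proj_biSup_eq_zero fg s hxs h

private lemma lie_mem_brkSpan {U V : Submodule K L} {x y : L} (hx : x ∈ U) (hy : y ∈ V) :
    ⁅x, y⁆ ∈ brkSpan K U V :=
  Submodule.subset_span ⟨x, hx, y, hy, rfl⟩

private lemma brkSpan_le {U V W : Submodule K L}
    (h : ∀ x ∈ U, ∀ y ∈ V, ⁅x, y⁆ ∈ W) : brkSpan K U V ≤ W := by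
  refine Submodule.span_le.2 ?_
  rintro w ⟨x, hx, y, hy, rfl⟩
  exact h x hx y hy

private lemma brkSpan_mono {U V U' V' : Submodule K L} (hU : U ≤ U') (hV : V ≤ V') :
    brkSpan K U V ≤ brkSpan K U' V' :=
  brkSpan_le fun x hx y hy => lie_mem_brkSpan (hU hx) (hV hy)

private lemma brkSpan_le_g (fg : FiveGrading K L) (i j : ℤ) :
    brkSpan K (fg.g i) (fg.g j) ≤ fg.g (i + j) :=
  brkSpan_le fun x hx y hy => fg.lie_mem i j x y hx hy

/-- The candidate module `M = [T,T] ⊔ T`. -/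
private def Msub (fg : FiveGrading K L) : Submodule K L :=
  brkSpan K (Tsub fg) (Tsub fg) ⊔ Tsub fg

private lemma memT_of_mem (fg : FiveGrading K L) {ε : ℤ} (hε : ε = -1 ∨ ε = 1) {x : L}
    (hx : x ∈ fg.g ε) : x ∈ Tsub fg := by
  rcases hε with rfl | rfl
  · exact Submodule.mem_sup_left hx
  · exact Submodule.mem_sup_right hx

private lemma case_lemma (fg : FiveGrading K L) {i ε : ℤ} {x y : L}
    (hx : x ∈ fg.g i) (hy : y ∈ fg.g ε) (hε : ε = -1 ∨ ε = 1)
    (hi : -2 ≤ i) (hi' : i ≤ 2) : ⁅x, y⁆ ∈ Msub fg := by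
  by_cases hiT : i = -1 ∨ i = 1
  · exact Submodule.mem_sup_left
      (lie_mem_brkSpan (memT_of_mem fg hiT hx) (memT_of_mem fg hε hy))
  · push_neg at hiT
    have hbr : ⁅x, y⁆ ∈ fg.g (i + ε) := fg.lie_mem i ε x y hx hy
    have hcases : i + ε = -1 ∨ i + ε = 1 ∨ i + ε = 3 ∨ i + ε = -3 := by omega
    rcases hcases with h | h | h | h
    · rw [h] at hbr
      exact Submodule.mem_sup_right (Submodule.mem_sup_left hbr)
    · rw [h] at hbr
      exact Submodule.mem_sup_right (Submodule.mem_sup_right hbr)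
    · rw [h, fg.vanish 3 (by norm_num)] at hbr
      rw [(Submodule.mem_bot K).mp hbr]
      exact zero_mem _
    · rw [h, fg.vanish (-3) (by norm_num)] at hbr
      rw [(Submodule.mem_bot K).mp hbr]
      exact zero_mem _

private lemma lie_g_mem (fg : FiveGrading K L) (x : L) {ε : ℤ} (hε : ε = -1 ∨ ε = 1)
    {y : L} (hy : y ∈ fg.g ε) : ⁅x, y⁆ ∈ Msub fg := by
  have hx : x ∈ ⨆ i, fg.g i := by
    rw [fg.internal.submodule_iSup_eq_top]; trivial
  refine Submodule.iSup_induction (motive := fun x => ⁅x, y⁆ ∈ Msub fg) _ hx ?_ ?_ ?_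
  · intro i z hz
    show ⁅z, y⁆ ∈ Msub fg
    by_cases h2 : 2 < |i|
    · rw [fg.vanish i h2] at hz
      rw [(Submodule.mem_bot K).mp hz, zero_lie]
      exact zero_mem _
    · push_neg at h2
      rw [abs_le] at h2
      exact case_lemma fg hz hy hε h2.1 h2.2
  · show ⁅(0 : L), y⁆ ∈ Msub fg
    rw [zero_lie]; exact zero_mem _
  · intro a b ha hb
    show ⁅a + b, y⁆ ∈ Msub fg
    rw [add_lie]; exact add_mem ha hb

private lemma lie_T_mem (fg : FiveGrading K L) (x : L) {y : L} (hy : y ∈ Tsub fg) :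
    ⁅x, y⁆ ∈ Msub fg := by
  obtain ⟨a, ha, b, hb, rfl⟩ := Submodule.mem_sup.mp hy
  rw [lie_add]
  exact add_mem (lie_g_mem fg x (Or.inl rfl) ha) (lie_g_mem fg x (Or.inr rfl) hb)

private lemma brk_decomp (fg : FiveGrading K L) :
    brkSpan K (Tsub fg) (Tsub fg)
      = brkSpan K (fg.g (-1)) (fg.g (-1)) ⊔ brkSpan K (fg.g (-1)) (fg.g 1)
          ⊔ brkSpan K (fg.g 1) (fg.g 1) := by
  refine le_antisymm ?_ ?_
  · refine brkSpan_le ?_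
    intro x hx y hy
    obtain ⟨a, ha, b, hb, rfl⟩ := Submodule.mem_sup.mp hx
    obtain ⟨c, hc, d, hd, rfl⟩ := Submodule.mem_sup.mp hy
    rw [add_lie, lie_add, lie_add]
    have h1 : ⁅a, c⁆ ∈ brkSpan K (fg.g (-1)) (fg.g (-1)) := lie_mem_brkSpan ha hc
    have h2 : ⁅a, d⁆ ∈ brkSpan K (fg.g (-1)) (fg.g 1) := lie_mem_brkSpan ha hd
    have h3 : ⁅b, c⁆ ∈ brkSpan K (fg.g (-1)) (fg.g 1) := by
      rw [← lie_skew]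
      exact neg_mem (lie_mem_brkSpan hc hb)
    have h4 : ⁅b, d⁆ ∈ brkSpan K (fg.g 1) (fg.g 1) := lie_mem_brkSpan hb hd
    exact add_mem
      (add_mem (Submodule.mem_sup_left (Submodule.mem_sup_left h1))
        (Submodule.mem_sup_left (Submodule.mem_sup_right h2)))
      (add_mem (Submodule.mem_sup_left (Submodule.mem_sup_right h3))
        (Submodule.mem_sup_right h4))
  · refine sup_le (sup_le ?_ ?_) ?_
    · exact brkSpan_mono le_sup_left le_sup_left
    · exact brkSpan_mono le_sup_left le_sup_right
    · exact brkSpan_mono le_sup_right le_sup_right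

/-- `E = g(-2) ⊔ g 0 ⊔ g 2`, the "even part". -/
private lemma brk_le_even (fg : FiveGrading K L) :
    brkSpan K (Tsub fg) (Tsub fg) ≤ fg.g (-2) ⊔ fg.g 0 ⊔ fg.g 2 := by
  rw [brk_decomp fg]
  refine sup_le (sup_le ?_ ?_) ?_
  · exact le_trans (brkSpan_le_g fg (-1) (-1)) (le_sup_left.trans le_sup_left)
  · exact le_trans (brkSpan_le_g fg (-1) 1) (le_sup_right.trans le_sup_left)
  · exact le_trans (brkSpan_le_g fg 1 1) le_sup_right

private lemma lie_B_g_mem (fg : FiveGrading K L) {w : L}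
    (hw : w ∈ brkSpan K (Tsub fg) (Tsub fg)) {ε : ℤ} (hε : ε = -1 ∨ ε = 1)
    {c : L} (hc : c ∈ fg.g ε) : ⁅w, c⁆ ∈ Msub fg := by
  have hw' := brk_le_even fg hw
  obtain ⟨u, hu, w3, hw3, rfl⟩ := Submodule.mem_sup.mp hw'
  obtain ⟨w1, hw1, w2, hw2, rfl⟩ := Submodule.mem_sup.mp hu
  rw [add_lie, add_lie]
  exact add_mem (add_mem (case_lemma fg hw1 hc hε (by norm_num) (by norm_num))
    (case_lemma fg hw2 hc hε (by norm_num) (by norm_num)))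
    (case_lemma fg hw3 hc hε (by norm_num) (by norm_num))

private lemma lie_M_T_mem (fg : FiveGrading K L) {m : L} (hm : m ∈ Msub fg)
    {c : L} (hc : c ∈ Tsub fg) : ⁅m, c⁆ ∈ Msub fg := by
  obtain ⟨mB, hmB, mT, hmT, rfl⟩ := Submodule.mem_sup.mp hm
  obtain ⟨c1, hc1, c2, hc2, rfl⟩ := Submodule.mem_sup.mp hc
  rw [add_lie, lie_add, lie_add]
  refine add_mem (add_mem ?_ ?_) ?_
  · exact lie_B_g_mem fg hmB (Or.inl rfl) hc1
  · exact lie_B_g_mem fg hmB (Or.inr rfl) hc2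
  · rw [← lie_add]
    exact Submodule.mem_sup_left (lie_mem_brkSpan hmT (add_mem
      (Submodule.mem_sup_left hc1) (Submodule.mem_sup_right hc2)))

private lemma lie_B_mem (fg : FiveGrading K L) (x : L) {w : L}
    (hw : w ∈ brkSpan K (Tsub fg) (Tsub fg)) : ⁅x, w⁆ ∈ Msub fg := by
  induction hw using Submodule.span_induction with
  | mem w hw =>
    obtain ⟨a, ha, b, hb, rfl⟩ := hw
    rw [leibniz_lie]
    refine add_mem (lie_M_T_mem fg (lie_T_mem fg x ha) hb) ?_
    rw [← lie_skew]
    exact neg_mem (lie_M_T_mem fg (lie_T_mem fg x hb) ha)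
  | zero => rw [lie_zero]; exact zero_mem _
  | add a b _ _ ha hb => rw [lie_add]; exact add_mem ha hb
  | smul t a _ ha => rw [lie_smul]; exact Submodule.smul_mem _ t ha

private lemma lie_M_mem (fg : FiveGrading K L) (x : L) {m : L} (hm : m ∈ Msub fg) :
    ⁅x, m⁆ ∈ Msub fg := by
  obtain ⟨mB, hmB, mT, hmT, rfl⟩ := Submodule.mem_sup.mp hm
  rw [lie_add]
  exact add_mem (lie_B_mem fg x hmB) (lie_T_mem fg x hmT)

/-- `M` as a Lie subalgebra. -/
private def MLie (fg : FiveGrading K L) : LieSubalgebra K L :=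
  { Msub fg with
    lie_mem' := fun {x y} _ hy => lie_M_mem fg x hy }

private lemma mem_MLie (fg : FiveGrading K L) {x : L} : x ∈ MLie fg ↔ x ∈ Msub fg :=
  Iff.rfl

private lemma lieSpan_eq (fg : FiveGrading K L) :
    (LieSubalgebra.lieSpan K L ↑(Tsub fg)).toSubmodule = Msub fg := by
  refine le_antisymm ?_ ?_
  · have h : LieSubalgebra.lieSpan K L ↑(Tsub fg) ≤ MLie fg := by
      rw [LieSubalgebra.lieSpan_le]
      intro x hx
      exact Submodule.mem_sup_right hx
    intro x hx
    exact h hx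
  · refine sup_le ?_ ?_
    · refine brkSpan_le ?_
      intro x hx y hy
      exact (LieSubalgebra.lieSpan K L ↑(Tsub fg)).lie_mem
        (LieSubalgebra.subset_lieSpan hx) (LieSubalgebra.subset_lieSpan hy)
    · intro x hx
      exact LieSubalgebra.subset_lieSpan hx

end Statement1Aux

/-- If `P` is the Kantor pair enveloped by a 5-graded Lie algebra `L`,
then the Lie subalgebra generated by `T = T_L(P) = L₋₁ ⊕ L₁` is a graded ideal of `L`
enveloping `P`; it equals `[T,T] ⊕ T` as modules, and
`[T,T] = [L₋₁,L₋₁] ⊕ [L₋₁,L₁] ⊕ [L₁,L₁]`. -/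
theorem statement1 {K : Type*} [CommRing K] (h6 : IsUnit (6 : K))
    {L : Type*} [LieRing L] [LieAlgebra K L] (fg : FiveGrading K L) :
    -- ⟨T⟩ is an ideal of L
    (∀ x : L, ∀ y ∈ LieSubalgebra.lieSpan K L ↑(Tsub fg),
        ⁅x, y⁆ ∈ LieSubalgebra.lieSpan K L ↑(Tsub fg)) ∧
    -- ⟨T⟩ is graded with respect to the 5-grading
    ((LieSubalgebra.lieSpan K L ↑(Tsub fg)).toSubmodule
        = ⨆ i : ℤ, fg.g i ⊓ (LieSubalgebra.lieSpan K L ↑(Tsub fg)).toSubmodule) ∧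
    -- ⟨T⟩ envelops P, i.e. it contains T = L₋₁ ⊕ L₁ (with the inherited products)
    (Tsub fg ≤ (LieSubalgebra.lieSpan K L ↑(Tsub fg)).toSubmodule) ∧
    -- ⟨T⟩ = [T,T] ⊕ T as modules
    ((LieSubalgebra.lieSpan K L ↑(Tsub fg)).toSubmodule
        = brkSpan K (Tsub fg) (Tsub fg) ⊔ Tsub fg) ∧
    Disjoint (brkSpan K (Tsub fg) (Tsub fg)) (Tsub fg) ∧
    -- [T,T] = [L₋₁,L₋₁] ⊕ [L₋₁,L₁] ⊕ [L₁,L₁]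
    (brkSpan K (Tsub fg) (Tsub fg)
        = brkSpan K (fg.g (-1)) (fg.g (-1)) ⊔ brkSpan K (fg.g (-1)) (fg.g 1)
            ⊔ brkSpan K (fg.g 1) (fg.g 1)) ∧
    Disjoint (brkSpan K (fg.g (-1)) (fg.g (-1)))
      (brkSpan K (fg.g (-1)) (fg.g 1) ⊔ brkSpan K (fg.g 1) (fg.g 1)) ∧
    Disjoint (brkSpan K (fg.g (-1)) (fg.g 1))
      (brkSpan K (fg.g (-1)) (fg.g (-1)) ⊔ brkSpan K (fg.g 1) (fg.g 1)) := by
  classical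
  have hspan := lieSpan_eq fg
  have hbrk := brk_decomp fg
  refine ⟨?_, ?_, ?_, ?_, ?_, hbrk, ?_, ?_⟩
  · -- ideal
    intro x y hy
    have hy' : y ∈ Msub fg := by rw [← hspan]; exact hy
    have : ⁅x, y⁆ ∈ Msub fg := lie_M_mem fg x hy'
    rw [← hspan] at this
    exact this
  · -- graded
    rw [hspan]
    refine le_antisymm ?_ (iSup_le fun i => inf_le_right)
    have piece : ∀ (i j : ℤ), brkSpan K (fg.g i) (fg.g j) ≤ brkSpan K (Tsub fg) (Tsub fg) →
        brkSpan K (fg.g i) (fg.g j) ≤ ⨆ k : ℤ, fg.g k ⊓ Msub fg := by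
      intro i j hle
      have h1 : brkSpan K (fg.g i) (fg.g j) ≤ fg.g (i + j) ⊓ Msub fg :=
        le_inf (brkSpan_le_g fg i j) (le_trans hle le_sup_left)
      exact h1.trans (le_iSup (fun k => fg.g k ⊓ Msub fg) (i + j))
    refine sup_le ?_ ?_
    · rw [hbrk]
      refine sup_le (sup_le ?_ ?_) ?_
      · exact piece (-1) (-1) (hbrk ▸ le_sup_left.trans le_sup_left)
      · exact piece (-1) 1 (hbrk ▸ le_sup_right.trans le_sup_left)
      · exact piece 1 1 (hbrk ▸ le_sup_right)
    · refine sup_le ?_ ?_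
      · refine le_trans (le_inf le_rfl ?_) (le_iSup (fun k => fg.g k ⊓ Msub fg) (-1))
        exact le_trans le_sup_left le_sup_right
      · refine le_trans (le_inf le_rfl ?_) (le_iSup (fun k => fg.g k ⊓ Msub fg) 1)
        exact le_trans le_sup_right le_sup_right
  · -- T ≤ ⟨T⟩
    rw [hspan]
    exact le_sup_right
  · -- ⟨T⟩ = [T,T] ⊔ T
    rw [hspan]; rfl
  · -- Disjoint [T,T] T
    have h1 : brkSpan K (Tsub fg) (Tsub fg) ≤ ⨆ i ∈ ({-2, 0, 2} : Set ℤ), fg.g i := by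
      refine (brk_le_even fg).trans ?_
      refine sup_le (sup_le ?_ ?_) ?_
      · exact le_biSup _ (by simp)
      · exact le_biSup _ (by simp)
      · exact le_biSup _ (by simp)
    have h2 : Tsub fg ≤ ⨆ i ∈ ({-1, 1} : Set ℤ), fg.g i := by
      refine sup_le ?_ ?_
      · exact le_biSup _ (by simp)
      · exact le_biSup _ (by simp)
    exact (disjoint_biSup fg _ _ (by intro i hi; simp at hi ⊢; omega)).mono h1 h2
  · -- Disjoint [g-1,g-1] ([g-1,g1] ⊔ [g1,g1])
    have h1 : brkSpan K (fg.g (-1)) (fg.g (-1)) ≤ ⨆ i ∈ ({-2} : Set ℤ), fg.g i :=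
      (brkSpan_le_g fg (-1) (-1)).trans (le_biSup _ (by simp))
    have h2 : brkSpan K (fg.g (-1)) (fg.g 1) ⊔ brkSpan K (fg.g 1) (fg.g 1)
        ≤ ⨆ i ∈ ({0, 2} : Set ℤ), fg.g i := by
      refine sup_le ?_ ?_
      · exact (brkSpan_le_g fg (-1) 1).trans (le_biSup _ (by simp))
      · exact (brkSpan_le_g fg 1 1).trans (le_biSup _ (by simp))
    exact (disjoint_biSup fg _ _ (by intro i hi; simp at hi ⊢; omega)).mono h1 h2
  · -- Disjoint [g-1,g1] ([g-1,g-1] ⊔ [g1,g1])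
    have h1 : brkSpan K (fg.g (-1)) (fg.g 1) ≤ ⨆ i ∈ ({0} : Set ℤ), fg.g i :=
      (brkSpan_le_g fg (-1) 1).trans (le_biSup _ (by simp))
    have h2 : brkSpan K (fg.g (-1)) (fg.g (-1)) ⊔ brkSpan K (fg.g 1) (fg.g 1)
        ≤ ⨆ i ∈ ({-2, 2} : Set ℤ), fg.g i := by
      refine sup_le ?_ ?_
      · exact (brkSpan_le_g fg (-1) (-1)).trans (le_biSup _ (by simp))
      · exact (brkSpan_le_g fg 1 1).trans (le_biSup _ (by simp))
    exact (disjoint_biSup fg _ _ (by intro i hi; simp at hi ⊢; omega)).mono h1 h2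
end

section
/- Let P be a Kantor pair over 𝕂. Then the restriction map χ ↦ (χ|_{P⁻}, χ|_{P⁺}) is an isomorphism of unital associative 𝕂-algebras from the graded centroid C(𝔎(P), ℤ) of the Kantor Lie algebra 𝔎(P) (with its standard 5-grading) onto the centroid C(P) of P. -/
/-- The graded centroid `C(L, ℤ)` of a `ℤ`-graded Lie algebra. -/
def GradedCentroid (K : Type*) [CommRing K] {L : Type*} [LieRing L] [LieAlgebra K L]
    (fg : FiveGrading K L) : Set (Module.End K L) :=
  {χ | (∀ x y : L, χ ⁅x, y⁆ = ⁅χ x, y⁆) ∧ ∀ (i : ℤ) (x : L), x ∈ fg.g i → χ x ∈ fg.g i}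

/-- `ω = (ω⁻, ω⁺)` is the restriction of `χ` to `(P⁻, P⁺)` under the identifications. -/
def RestrRel {K : Type*} [CommRing K] {Pm Pp : Type*}
    [AddCommGroup Pm] [AddCommGroup Pp] [Module K Pm] [Module K Pp]
    {KP : KantorPair K Pm Pp} {L : Type*} [LieRing L] [LieAlgebra K L]
    {fg : FiveGrading K L} (E : Envelops KP fg)
    (χ : Module.End K L) (ω : (Pm →ₗ[K] Pm) × (Pp →ₗ[K] Pp)) : Prop :=
  (∀ x : Pm, χ (E.em x) = E.em (ω.1 x)) ∧ (∀ y : Pp, χ (E.ep y) = E.ep (ω.2 y))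

section Statement2Aux

open DirectSum

variable {K : Type*} [CommRing K] {Pm Pp : Type*}
  [AddCommGroup Pm] [AddCommGroup Pp] [Module K Pm] [Module K Pp]
  {KP : KantorPair K Pm Pp}
  {L : Type*} [LieRing L] [LieAlgebra K L] {fg : FiveGrading K L}

/-- The decomposition equivalence. -/
noncomputable def fgdec (fg : FiveGrading K L) : L ≃ₗ[K] ⨁ i, fg.g i :=
  (LinearEquiv.ofBijective (DirectSum.coeLinearMap fg.g) fg.internal).symm

/-- Projection onto the `i`-th graded component, as an endomorphism of `L`. -/
noncomputable def fgpi (fg : FiveGrading K L) (i : ℤ) : L →ₗ[K] L :=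
  (fg.g i).subtype ∘ₗ (DirectSum.component K ℤ (fun j => ↥(fg.g j)) i) ∘ₗ
    (fgdec fg).toLinearMap

lemma fgpi_apply (i : ℤ) (x : L) : fgpi fg i x = ((fgdec fg x) i : L) := rfl

lemma fgpi_mem (i : ℤ) (x : L) : fgpi fg i x ∈ fg.g i := (fgdec fg x i).2

lemma fgpi_of_mem {i : ℤ} {x : L} (hx : x ∈ fg.g i) : fgpi fg i x = x := by
  rw [fgpi_apply, fgdec, fg.internal.ofBijective_coeLinearMap_of_mem hx]

lemma fgpi_of_mem_ne {i j : ℤ} {x : L} (hx : x ∈ fg.g i) (hij : i ≠ j) :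
    fgpi fg j x = 0 := by
  rw [fgpi_apply, fgdec, fg.internal.ofBijective_coeLinearMap_of_mem_ne hij hx]
  rfl

lemma fgpi_vanish {j : ℤ} (hj : 2 < |j|) (x : L) : fgpi fg j x = 0 := by
  have h := fgpi_mem (fg := fg) j x
  rw [fg.vanish j hj, Submodule.mem_bot] at h
  exact h

lemma mem_of_fgpi {i : ℤ} {x : L} (h : ∀ j, j ≠ i → fgpi fg j x = 0) :
    x ∈ fg.g i := by
  have hx : DirectSum.coeLinearMap fg.g (fgdec fg x) = x := by
    exact
      (LinearEquiv.ofBijective (DirectSum.coeLinearMap fg.g) fg.internal).apply_symm_apply x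
  have hof : fgdec fg x = DirectSum.of (fun j => ↥(fg.g j)) i (fgdec fg x i) := by
    refine DFinsupp.ext fun j => ?_
    by_cases hji : j = i
    · subst hji; rw [DirectSum.of_eq_same]
    · have := h j hji
      rw [fgpi_apply] at this
      have h0 : fgdec fg x j = 0 := Subtype.ext this
      rw [h0, DirectSum.of_eq_of_ne _ _ _ hji]
  rw [← hx, hof, DirectSum.coeLinearMap_of]
  exact (fgdec fg x i).2

end Statement2Aux
section Statement2Aux2

variable {K : Type*} [CommRing K] {Pm Pp : Type*}
  [AddCommGroup Pm] [AddCommGroup Pp] [Module K Pm] [Module K Pp]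
  {KP : KantorPair K Pm Pp}
  {L : Type*} [LieRing L] [LieAlgebra K L] {fg : FiveGrading K L}
  (E : Envelops KP fg)

lemma em_mem (x : Pm) : E.em x ∈ fg.g (-1) := E.range_m ▸ LinearMap.mem_range_self _ x
lemma ep_mem (y : Pp) : E.ep y ∈ fg.g 1 := E.range_p ▸ LinearMap.mem_range_self _ y

/-- Embedding of `Pm × Pp` onto `T = L₋₁ ⊕ L₁`. -/
noncomputable def iot : Pm × Pp →ₗ[K] L :=
  E.em ∘ₗ LinearMap.fst K Pm Pp + E.ep ∘ₗ LinearMap.snd K Pm Pp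

lemma iot_apply (p : Pm × Pp) : iot E p = E.em p.1 + E.ep p.2 := rfl

lemma iot_mem_T (p : Pm × Pp) : iot E p ∈ Tsub fg := by
  rw [iot_apply]
  exact Submodule.add_mem _ (Submodule.mem_sup_left (em_mem E p.1))
    (Submodule.mem_sup_right (ep_mem E p.2))

lemma range_iot : LinearMap.range (iot E) = Tsub fg := by
  apply le_antisymm
  · rintro _ ⟨p, rfl⟩; exact iot_mem_T E p
  · rw [Tsub]
    apply sup_le
    · rw [← E.range_m]
      rintro _ ⟨x, rfl⟩
      exact ⟨(x, 0), by simp [iot_apply]⟩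
    · rw [← E.range_p]
      rintro _ ⟨y, rfl⟩
      exact ⟨(0, y), by simp [iot_apply]⟩

lemma mem_T_iff {t : L} : t ∈ Tsub fg ↔ ∃ p, iot E p = t := by
  rw [← range_iot E]; rfl

lemma iot_inj : Function.Injective (iot E) := by
  rw [← LinearMap.ker_eq_bot]
  refine (Submodule.eq_bot_iff _).2 fun p hp => ?_
  have hp' : E.em p.1 + E.ep p.2 = 0 := hp
  have h1 : fgpi fg (-1) (E.em p.1 + E.ep p.2) = E.em p.1 := by
    rw [map_add, fgpi_of_mem (em_mem E p.1), fgpi_of_mem_ne (ep_mem E p.2) (by norm_num),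
      add_zero]
  have h2 : fgpi fg 1 (E.em p.1 + E.ep p.2) = E.ep p.2 := by
    rw [map_add, fgpi_of_mem (ep_mem E p.2), fgpi_of_mem_ne (em_mem E p.1) (by norm_num),
      zero_add]
  rw [hp', map_zero] at h1 h2
  have : p.1 = 0 := E.inj_m (by simpa using h1.symm)
  have : p.2 = 0 := E.inj_p (by simpa using h2.symm)
  exact Prod.ext ‹p.1 = 0› ‹p.2 = 0›

/- Pure bracket computations. -/
lemma br_mpm (a c : Pm) (b : Pp) : ⁅⁅E.em a, E.ep b⁆, E.em c⁆ = E.em (KP.tm a b c) :=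
  (E.compat_m a c b).symm

lemma br_pmp (b d : Pp) (a : Pm) : ⁅⁅E.ep b, E.em a⁆, E.ep d⁆ = E.ep (KP.tp b a d) :=
  (E.compat_p b d a).symm

lemma br_pmm (a v : Pm) (b : Pp) :
    ⁅⁅E.ep b, E.em a⁆, E.em v⁆ = - E.em (KP.tm a b v) := by
  rw [← lie_skew (E.ep b) (E.em a), neg_lie, br_mpm]

lemma br_mpp (b w : Pp) (a : Pm) :
    ⁅⁅E.em a, E.ep b⁆, E.ep w⁆ = - E.ep (KP.tp b a w) := by
  rw [← lie_skew (E.em a) (E.ep b), neg_lie, br_pmp]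

lemma br_mmm (a c v : Pm) : ⁅⁅E.em a, E.em c⁆, E.em v⁆ = 0 := by
  have h : ⁅⁅E.em a, E.em c⁆, E.em v⁆ ∈ fg.g (-3) := by
    have h1 := fg.lie_mem (-1) (-1) _ _ (em_mem E a) (em_mem E c)
    have h2 := fg.lie_mem (-2) (-1) _ _ (by norm_num at h1 ⊢; exact h1) (em_mem E v)
    norm_num at h2 ⊢
    exact h2
  rw [fg.vanish (-3) (by norm_num), Submodule.mem_bot] at h
  exact h

lemma br_ppp (b d w : Pp) : ⁅⁅E.ep b, E.ep d⁆, E.ep w⁆ = 0 := by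
  have h : ⁅⁅E.ep b, E.ep d⁆, E.ep w⁆ ∈ fg.g 3 := by
    have h1 := fg.lie_mem 1 1 _ _ (ep_mem E b) (ep_mem E d)
    have h2 := fg.lie_mem 2 1 _ _ (by norm_num at h1 ⊢; exact h1) (ep_mem E w)
    norm_num at h2 ⊢
    exact h2
  rw [fg.vanish 3 (by norm_num), Submodule.mem_bot] at h
  exact h

lemma br_mmp (a c : Pm) (w : Pp) :
    ⁅⁅E.em a, E.em c⁆, E.ep w⁆ = E.em (KP.tm a w c) - E.em (KP.tm c w a) := by
  rw [lie_lie, ← lie_skew (E.em a) (⁅E.em c, E.ep w⁆), ← lie_skew (E.em c) (⁅E.em a, E.ep w⁆),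
    br_mpm, br_mpm]
  abel

lemma br_ppm (b d : Pp) (v : Pm) :
    ⁅⁅E.ep b, E.ep d⁆, E.em v⁆ = E.ep (KP.tp b v d) - E.ep (KP.tp d v b) := by
  rw [lie_lie, ← lie_skew (E.ep b) (⁅E.ep d, E.em v⁆), ← lie_skew (E.ep d) (⁅E.ep b, E.em v⁆),
    br_pmp, br_pmp]
  abel

/-- Explicit formula for the triple bracket of three elements of `T`. -/
def trip (KP : KantorPair K Pm Pp) (p q r : Pm × Pp) : Pm × Pp :=
  (KP.tm p.1 q.2 r.1 - KP.tm q.1 p.2 r.1 + (KP.tm p.1 r.2 q.1 - KP.tm q.1 r.2 p.1),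
   KP.tp p.2 q.1 r.2 - KP.tp q.2 p.1 r.2 + (KP.tp p.2 r.1 q.2 - KP.tp q.2 r.1 p.2))

lemma trip_eq (p q r : Pm × Pp) :
    ⁅⁅iot E p, iot E q⁆, iot E r⁆ = iot E (trip KP p q r) := by
  obtain ⟨a, b⟩ := p; obtain ⟨c, d⟩ := q; obtain ⟨v, w⟩ := r
  simp only [iot_apply, trip, lie_add, add_lie]
  rw [br_mmm, br_mpm, br_pmm, br_mmp, br_mpp, br_pmp, br_ppm, br_ppp]
  simp only [map_add, map_sub]
  abel

end Statement2Aux2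
section Statement2Aux3

open TensorProduct

variable {K : Type*} [CommRing K] {Pm Pp : Type*}
  [AddCommGroup Pm] [AddCommGroup Pp] [Module K Pm] [Module K Pp]
  {KP : KantorPair K Pm Pp}
  {L : Type*} [LieRing L] [LieAlgebra K L] {fg : FiveGrading K L}
  (E : Envelops KP fg)

/-- The pair of maps `ω`, as an endomorphism of `Pm × Pp`. -/
def wpr (ω : (Pm →ₗ[K] Pm) × (Pp →ₗ[K] Pp)) : Pm × Pp →ₗ[K] Pm × Pp :=
  LinearMap.prodMap ω.1 ω.2

section centroid
variable {ω : (Pm →ₗ[K] Pm) × (Pp →ₗ[K] Pp)} (hc : KP.InCentroid ω.1 ω.2)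
include hc

lemma trip_w1 (p q r : Pm × Pp) :
    trip KP (wpr ω p) q r = wpr ω (trip KP p q r) := by
  have hm1 : ∀ x y z, KP.tm (ω.1 x) y z = ω.1 (KP.tm x y z) := fun x y z => ((hc.1 x y z).1).symm
  have hm2 : ∀ x y z, KP.tm x (ω.2 y) z = ω.1 (KP.tm x y z) := fun x y z => ((hc.1 x y z).2.1).symm
  have hm3 : ∀ x y z, KP.tm x y (ω.1 z) = ω.1 (KP.tm x y z) := fun x y z => ((hc.1 x y z).2.2).symm
  have hp1 : ∀ x y z, KP.tp (ω.2 x) y z = ω.2 (KP.tp x y z) := fun x y z => ((hc.2 x y z).1).symm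
  have hp2 : ∀ x y z, KP.tp x (ω.1 y) z = ω.2 (KP.tp x y z) := fun x y z => ((hc.2 x y z).2.1).symm
  have hp3 : ∀ x y z, KP.tp x y (ω.2 z) = ω.2 (KP.tp x y z) := fun x y z => ((hc.2 x y z).2.2).symm
  simp only [trip, wpr, LinearMap.prodMap_apply, Prod.mk.injEq, hm1, hm2, hm3, hp1, hp2, hp3,
    map_add, map_sub]

lemma trip_w2 (p q r : Pm × Pp) :
    trip KP p (wpr ω q) r = wpr ω (trip KP p q r) := by
  have hm1 : ∀ x y z, KP.tm (ω.1 x) y z = ω.1 (KP.tm x y z) := fun x y z => ((hc.1 x y z).1).symm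
  have hm2 : ∀ x y z, KP.tm x (ω.2 y) z = ω.1 (KP.tm x y z) := fun x y z => ((hc.1 x y z).2.1).symm
  have hm3 : ∀ x y z, KP.tm x y (ω.1 z) = ω.1 (KP.tm x y z) := fun x y z => ((hc.1 x y z).2.2).symm
  have hp1 : ∀ x y z, KP.tp (ω.2 x) y z = ω.2 (KP.tp x y z) := fun x y z => ((hc.2 x y z).1).symm
  have hp2 : ∀ x y z, KP.tp x (ω.1 y) z = ω.2 (KP.tp x y z) := fun x y z => ((hc.2 x y z).2.1).symm
  have hp3 : ∀ x y z, KP.tp x y (ω.2 z) = ω.2 (KP.tp x y z) := fun x y z => ((hc.2 x y z).2.2).symm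
  simp only [trip, wpr, LinearMap.prodMap_apply, Prod.mk.injEq, hm1, hm2, hm3, hp1, hp2, hp3,
    map_add, map_sub]

lemma trip_w3 (p q r : Pm × Pp) :
    trip KP p q (wpr ω r) = wpr ω (trip KP p q r) := by
  have hm1 : ∀ x y z, KP.tm (ω.1 x) y z = ω.1 (KP.tm x y z) := fun x y z => ((hc.1 x y z).1).symm
  have hm2 : ∀ x y z, KP.tm x (ω.2 y) z = ω.1 (KP.tm x y z) := fun x y z => ((hc.1 x y z).2.1).symm
  have hm3 : ∀ x y z, KP.tm x y (ω.1 z) = ω.1 (KP.tm x y z) := fun x y z => ((hc.1 x y z).2.2).symm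
  have hp1 : ∀ x y z, KP.tp (ω.2 x) y z = ω.2 (KP.tp x y z) := fun x y z => ((hc.2 x y z).1).symm
  have hp2 : ∀ x y z, KP.tp x (ω.1 y) z = ω.2 (KP.tp x y z) := fun x y z => ((hc.2 x y z).2.1).symm
  have hp3 : ∀ x y z, KP.tp x y (ω.2 z) = ω.2 (KP.tp x y z) := fun x y z => ((hc.2 x y z).2.2).symm
  simp only [trip, wpr, LinearMap.prodMap_apply, Prod.mk.injEq, hm1, hm2, hm3, hp1, hp2, hp3,
    map_add, map_sub]

end centroid

/-- The bracket `(p, q) ↦ ⁅ι p, ι q⁆` as a bilinear map. -/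
noncomputable def brB : (Pm × Pp) →ₗ[K] (Pm × Pp) →ₗ[K] L :=
  LinearMap.mk₂ K (fun p q => ⁅iot E p, iot E q⁆)
    (fun p p' q => by simp [add_lie])
    (fun a p q => by simp [smul_lie])
    (fun p q q' => by simp [lie_add])
    (fun a p q => by simp)

/-- `brT` sends `p ⊗ q` to `⁅ι p, ι q⁆`. -/
noncomputable def brT : (Pm × Pp) ⊗[K] (Pm × Pp) →ₗ[K] L := TensorProduct.lift (brB E)

/-- `brT'` sends `p ⊗ q` to `⁅ι (ω p), ι q⁆`. -/
noncomputable def brT' (ω : (Pm →ₗ[K] Pm) × (Pp →ₗ[K] Pp)) :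
    (Pm × Pp) ⊗[K] (Pm × Pp) →ₗ[K] L := TensorProduct.lift ((brB E) ∘ₗ wpr ω)

@[simp] lemma brT_tmul (p q : Pm × Pp) : brT E (p ⊗ₜ[K] q) = ⁅iot E p, iot E q⁆ := rfl

@[simp] lemma brT'_tmul (ω : (Pm →ₗ[K] Pm) × (Pp →ₗ[K] Pp)) (p q : Pm × Pp) :
    brT' E ω (p ⊗ₜ[K] q) = ⁅iot E (wpr ω p), iot E q⁆ := rfl

lemma brT_mem_span (s : (Pm × Pp) ⊗[K] (Pm × Pp)) :
    brT E s ∈ brkSpan K (Tsub fg) (Tsub fg) := by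
  have hs : s ∈ Submodule.span K {t : (Pm × Pp) ⊗[K] (Pm × Pp) | ∃ m n, m ⊗ₜ n = t} := by
    rw [TensorProduct.span_tmul_eq_top]; trivial
  induction hs using Submodule.span_induction with
  | mem x h =>
      obtain ⟨p, q, rfl⟩ := h
      exact Submodule.subset_span ⟨iot E p, iot_mem_T E p, iot E q, iot_mem_T E q, rfl⟩
  | zero => simpa using Submodule.zero_mem _
  | add x y hx hy ihx ihy => rw [map_add]; exact Submodule.add_mem _ ihx ihy
  | smul a x hx ihx => rw [map_smul]; exact Submodule.smul_mem _ a ihx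

lemma brT'_mem_span (ω : (Pm →ₗ[K] Pm) × (Pp →ₗ[K] Pp)) (s : (Pm × Pp) ⊗[K] (Pm × Pp)) :
    brT' E ω s ∈ brkSpan K (Tsub fg) (Tsub fg) := by
  have hs : s ∈ Submodule.span K {t : (Pm × Pp) ⊗[K] (Pm × Pp) | ∃ m n, m ⊗ₜ n = t} := by
    rw [TensorProduct.span_tmul_eq_top]; trivial
  induction hs using Submodule.span_induction with
  | mem x h =>
      obtain ⟨p, q, rfl⟩ := h
      exact Submodule.subset_span ⟨iot E (wpr ω p), iot_mem_T E _, iot E q, iot_mem_T E q, rfl⟩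
  | zero => simpa using Submodule.zero_mem _
  | add x y hx hy ihx ihy => rw [map_add]; exact Submodule.add_mem _ ihx ihy
  | smul a x hx ihx => rw [map_smul]; exact Submodule.smul_mem _ a ihx

end Statement2Aux3
section Statement2Aux4

variable {K : Type*} [CommRing K] {Pm Pp : Type*}
  [AddCommGroup Pm] [AddCommGroup Pp] [Module K Pm] [Module K Pp]
  {KP : KantorPair K Pm Pp}
  {L : Type*} [LieRing L] [LieAlgebra K L] {fg : FiveGrading K L}

lemma g_le_T_neg : fg.g (-1) ≤ Tsub fg := le_sup_left
lemma g_le_T_pos : fg.g 1 ≤ Tsub fg := le_sup_right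

/-- Pure triple brackets of degree-`±1` elements lie in `T`. -/
lemma lie_lie_mem_T {i j k : ℤ} (hi : i = -1 ∨ i = 1) (hj : j = -1 ∨ j = 1)
    (hk : k = -1 ∨ k = 1) {a b c : L} (ha : a ∈ fg.g i) (hb : b ∈ fg.g j)
    (hc : c ∈ fg.g k) : ⁅a, ⁅b, c⁆⁆ ∈ Tsub fg := by
  have h := fg.lie_mem i (j + k) a ⁅b, c⁆ ha (fg.lie_mem j k b c hb hc)
  rcases hi with rfl | rfl <;> rcases hj with rfl | rfl <;> rcases hk with rfl | rfl <;>
    norm_num at h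
  · have h0 : ⁅a, ⁅b, c⁆⁆ = 0 := by
      rw [show (-3 : ℤ) = -1 + (-1 + -1) by norm_num, fg.vanish _ (by norm_num),
        Submodule.mem_bot] at h
      exact h
    rw [h0]; exact Submodule.zero_mem _
  · exact g_le_T_neg h
  · exact g_le_T_neg h
  · exact g_le_T_pos h
  · exact g_le_T_neg h
  · exact g_le_T_pos h
  · exact g_le_T_pos h
  · have h0 : ⁅a, ⁅b, c⁆⁆ = 0 := by
      rw [show (3 : ℤ) = 1 + (1 + 1) by norm_num, fg.vanish _ (by norm_num),
        Submodule.mem_bot] at h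
      exact h
    rw [h0]; exact Submodule.zero_mem _

lemma lie_T_lie_T_mem_T {t x y : L} (ht : t ∈ Tsub fg) (hx : x ∈ Tsub fg)
    (hy : y ∈ Tsub fg) : ⁅t, ⁅x, y⁆⁆ ∈ Tsub fg := by
  obtain ⟨t1, ht1, t2, ht2, rfl⟩ := Submodule.mem_sup.1 ht
  obtain ⟨x1, hx1, x2, hx2, rfl⟩ := Submodule.mem_sup.1 hx
  obtain ⟨y1, hy1, y2, hy2, rfl⟩ := Submodule.mem_sup.1 hy
  have hexp : ⁅t1 + t2, ⁅x1 + x2, y1 + y2⁆⁆ =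
      ⁅t1, ⁅x1, y1⁆⁆ + ⁅t1, ⁅x1, y2⁆⁆ + ⁅t1, ⁅x2, y1⁆⁆ + ⁅t1, ⁅x2, y2⁆⁆ +
      ⁅t2, ⁅x1, y1⁆⁆ + ⁅t2, ⁅x1, y2⁆⁆ + ⁅t2, ⁅x2, y1⁆⁆ + ⁅t2, ⁅x2, y2⁆⁆ := by
    simp only [lie_add, add_lie]; abel
  rw [hexp]
  exact Submodule.add_mem _ (Submodule.add_mem _ (Submodule.add_mem _ (Submodule.add_mem _
    (Submodule.add_mem _ (Submodule.add_mem _ (Submodule.add_mem _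
      (lie_lie_mem_T (Or.inl rfl) (Or.inl rfl) (Or.inl rfl) ht1 hx1 hy1)
      (lie_lie_mem_T (Or.inl rfl) (Or.inl rfl) (Or.inr rfl) ht1 hx1 hy2))
      (lie_lie_mem_T (Or.inl rfl) (Or.inr rfl) (Or.inl rfl) ht1 hx2 hy1))
      (lie_lie_mem_T (Or.inl rfl) (Or.inr rfl) (Or.inr rfl) ht1 hx2 hy2))
      (lie_lie_mem_T (Or.inr rfl) (Or.inl rfl) (Or.inl rfl) ht2 hx1 hy1))
      (lie_lie_mem_T (Or.inr rfl) (Or.inl rfl) (Or.inr rfl) ht2 hx1 hy2))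
      (lie_lie_mem_T (Or.inr rfl) (Or.inr rfl) (Or.inl rfl) ht2 hx2 hy1))
      (lie_lie_mem_T (Or.inr rfl) (Or.inr rfl) (Or.inr rfl) ht2 hx2 hy2)

lemma lie_T_brk_mem_T {t s : L} (ht : t ∈ Tsub fg)
    (hs : s ∈ brkSpan K (Tsub fg) (Tsub fg)) : ⁅t, s⁆ ∈ Tsub fg := by
  induction hs using Submodule.span_induction with
  | mem w hw =>
      obtain ⟨x, hx, y, hy, rfl⟩ := hw
      exact lie_T_lie_T_mem_T ht hx hy
  | zero => simp
  | add x y hx hy ihx ihy => rw [lie_add]; exact Submodule.add_mem _ ihx ihy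
  | smul a x hx ihx => rw [lie_smul]; exact Submodule.smul_mem _ a ihx

lemma brk_mem_brkSpan {x y : L} (hx : x ∈ Tsub fg) (hy : y ∈ Tsub fg) :
    ⁅x, y⁆ ∈ brkSpan K (Tsub fg) (Tsub fg) :=
  Submodule.subset_span ⟨x, hx, y, hy, rfl⟩

lemma brk_lie_brk_mem {s s' : L} (hs : s ∈ brkSpan K (Tsub fg) (Tsub fg))
    (hs' : s' ∈ brkSpan K (Tsub fg) (Tsub fg)) :
    ⁅s, s'⁆ ∈ brkSpan K (Tsub fg) (Tsub fg) := by
  induction hs using Submodule.span_induction with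
  | mem w hw =>
      obtain ⟨x, hx, y, hy, rfl⟩ := hw
      induction hs' using Submodule.span_induction with
      | mem w' hw' =>
          obtain ⟨z, hz, w'', hw'', rfl⟩ := hw'
          rw [leibniz_lie]
          refine Submodule.add_mem _ ?_ ?_
          · refine brk_mem_brkSpan ?_ hw''
            rw [← lie_skew]
            exact Submodule.neg_mem _ (lie_T_lie_T_mem_T hz hx hy)
          · refine brk_mem_brkSpan hz ?_
            rw [← lie_skew]
            exact Submodule.neg_mem _ (lie_T_lie_T_mem_T hw'' hx hy)
      | zero => simp
      | add a b ha hb iha ihb => rw [lie_add]; exact Submodule.add_mem _ iha ihb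
      | smul a x' hx' ihx => rw [lie_smul]; exact Submodule.smul_mem _ a ihx
  | zero => simp
  | add a b ha hb iha ihb => rw [add_lie]; exact Submodule.add_mem _ iha ihb
  | smul a x' hx' ihx => rw [smul_lie]; exact Submodule.smul_mem _ a ihx

/-- `T ⊔ [T,T]` is closed under the bracket. -/
lemma M_lie_closed {u v : L}
    (hu : u ∈ Tsub fg ⊔ brkSpan K (Tsub fg) (Tsub fg))
    (hv : v ∈ Tsub fg ⊔ brkSpan K (Tsub fg) (Tsub fg)) :
    ⁅u, v⁆ ∈ Tsub fg ⊔ brkSpan K (Tsub fg) (Tsub fg) := by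
  obtain ⟨t, htT, s, hs, rfl⟩ := Submodule.mem_sup.1 hu
  obtain ⟨t', ht'T, s', hs', rfl⟩ := Submodule.mem_sup.1 hv
  have hexp : ⁅t + s, t' + s'⁆ = ⁅t, t'⁆ + ⁅t, s'⁆ + ⁅s, t'⁆ + ⁅s, s'⁆ := by
    simp only [lie_add, add_lie]; abel
  rw [hexp]
  refine Submodule.add_mem _ (Submodule.add_mem _ (Submodule.add_mem _ ?_ ?_) ?_) ?_
  · exact Submodule.mem_sup_right (brk_mem_brkSpan htT ht'T)
  · exact Submodule.mem_sup_left (lie_T_brk_mem_T htT hs')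
  · rw [← lie_skew]
    exact Submodule.neg_mem _ (Submodule.mem_sup_left (lie_T_brk_mem_T ht'T hs))
  · exact Submodule.mem_sup_right (brk_lie_brk_mem hs hs')

/-- For a tight grading, `L = T + [T,T]`. -/
lemma top_eq_T_sup_brk (ht : Tight K fg) :
    Tsub fg ⊔ brkSpan K (Tsub fg) (Tsub fg) = (⊤ : Submodule K L) := by
  set M : Submodule K L := Tsub fg ⊔ brkSpan K (Tsub fg) (Tsub fg) with hM
  let S : LieSubalgebra K L :=
    { toSubmodule := M
      lie_mem' := fun hx hy => M_lie_closed hx hy }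
  have h1 : LieSubalgebra.lieSpan K L ↑(Tsub fg) ≤ S :=
    (LieSubalgebra.lieSpan_le).2 (fun x hx => Submodule.mem_sup_left hx)
  rw [ht.1] at h1
  exact le_antisymm le_top fun x _ => h1 trivial

end Statement2Aux4
section Statement2Aux5

open TensorProduct

variable {K : Type*} [CommRing K] {Pm Pp : Type*}
  [AddCommGroup Pm] [AddCommGroup Pp] [Module K Pm] [Module K Pp]
  {KP : KantorPair K Pm Pp}
  {L : Type*} [LieRing L] [LieAlgebra K L] {fg : FiveGrading K L}
  (E : Envelops KP fg)

lemma central_of_T (ht : Tight K fg) {z : L}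
    (h : ∀ p : Pm × Pp, ⁅z, iot E p⁆ = 0) : ∀ u : L, ⁅z, u⁆ = 0 := by
  have hT : ∀ t ∈ Tsub fg, ⁅z, t⁆ = 0 := by
    intro t htT
    obtain ⟨p, rfl⟩ := (mem_T_iff E).1 htT
    exact h p
  intro u
  have hu : u ∈ Tsub fg ⊔ brkSpan K (Tsub fg) (Tsub fg) := by
    rw [top_eq_T_sup_brk ht]; trivial
  obtain ⟨t, htT, s, hs, rfl⟩ := Submodule.mem_sup.1 hu
  rw [lie_add, hT t htT, zero_add]
  clear hu
  induction hs using Submodule.span_induction with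
  | mem w hw =>
      obtain ⟨x, hx, y, hy, rfl⟩ := hw
      rw [leibniz_lie, hT x hx, hT y hy, lie_zero, zero_lie, add_zero]
  | zero => simp
  | add a b ha hb iha ihb => rw [lie_add, iha, ihb, add_zero]
  | smul a x' hx' ihx => rw [lie_smul, ihx, smul_zero]

section withCentroid

variable {ω : (Pm →ₗ[K] Pm) × (Pp →ₗ[K] Pp)} (hc : KP.InCentroid ω.1 ω.2)
include hc

lemma lemA (p q r : Pm × Pp) :
    ⁅⁅iot E (wpr ω p), iot E q⁆, iot E r⁆ = ⁅⁅iot E p, iot E q⁆, iot E (wpr ω r)⁆ := by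
  rw [trip_eq, trip_eq, trip_w1 hc, trip_w3 hc]

lemma br'_br (s : (Pm × Pp) ⊗[K] (Pm × Pp)) (r : Pm × Pp) :
    ⁅brT' E ω s, iot E r⁆ = ⁅brT E s, iot E (wpr ω r)⁆ := by
  have hs : s ∈ Submodule.span K {t : (Pm × Pp) ⊗[K] (Pm × Pp) | ∃ m n, m ⊗ₜ n = t} := by
    rw [TensorProduct.span_tmul_eq_top]; trivial
  induction hs using Submodule.span_induction with
  | mem x h => obtain ⟨p, q, rfl⟩ := h; rw [brT_tmul, brT'_tmul]; exact lemA E hc p q r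
  | zero => simp
  | add a b ha hb iha ihb => rw [map_add, map_add, add_lie, add_lie, iha, ihb]
  | smul a x' hx' ihx => rw [map_smul, map_smul, smul_lie, smul_lie, ihx]

lemma br_zero (ht : Tight K fg) {s : (Pm × Pp) ⊗[K] (Pm × Pp)}
    (hs : brT E s = 0) : brT' E ω s = 0 := by
  refine ht.2 _ (brT'_mem_span E ω s) (central_of_T E ht fun r => ?_)
  rw [br'_br E hc, hs, zero_lie]

lemma lemC (ht : Tight K fg) (r s : Pm × Pp) :
    ⁅iot E (wpr ω r), iot E s⁆ = ⁅iot E r, iot E (wpr ω s)⁆ := by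
  have hz : ⁅iot E (wpr ω r), iot E s⁆ - ⁅iot E r, iot E (wpr ω s)⁆ = 0 := by
    refine ht.2 _ ?_ (central_of_T E ht fun t => ?_)
    · exact Submodule.sub_mem _ (brk_mem_brkSpan (iot_mem_T E _) (iot_mem_T E _))
        (brk_mem_brkSpan (iot_mem_T E _) (iot_mem_T E _))
    · rw [sub_lie, trip_eq, trip_eq, trip_w1 hc, trip_w2 hc, sub_self]
  exact sub_eq_zero.1 hz

end withCentroid

end Statement2Aux5
section Statement2Aux6

open TensorProduct

variable {K : Type*} [CommRing K] {Pm Pp : Type*}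
  [AddCommGroup Pm] [AddCommGroup Pp] [Module K Pm] [Module K Pp]
  {KP : KantorPair K Pm Pp}
  {L : Type*} [LieRing L] [LieAlgebra K L] {fg : FiveGrading K L}
  (E : Envelops KP fg)

lemma lie_mm_mem (a c : Pm) : ⁅E.em a, E.em c⁆ ∈ fg.g (-2) := by
  have h := fg.lie_mem (-1) (-1) _ _ (em_mem E a) (em_mem E c)
  norm_num at h; exact h

lemma lie_pp_mem (b d : Pp) : ⁅E.ep b, E.ep d⁆ ∈ fg.g 2 := by
  have h := fg.lie_mem 1 1 _ _ (ep_mem E b) (ep_mem E d)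
  norm_num at h; exact h

lemma lie_mp_mem (a : Pm) (d : Pp) : ⁅E.em a, E.ep d⁆ ∈ fg.g 0 := by
  have h := fg.lie_mem (-1) 1 _ _ (em_mem E a) (ep_mem E d)
  norm_num at h; exact h

lemma lie_pm_mem (b : Pp) (c : Pm) : ⁅E.ep b, E.em c⁆ ∈ fg.g 0 := by
  have h := fg.lie_mem 1 (-1) _ _ (ep_mem E b) (em_mem E c)
  norm_num at h; exact h

/-- Projection of `Pm × Pp` onto the `Pm` factor. -/
def Pneg (K : Type*) [CommRing K] {Pm Pp : Type*} [AddCommGroup Pm] [AddCommGroup Pp]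
    [Module K Pm] [Module K Pp] : Pm × Pp →ₗ[K] Pm × Pp :=
  LinearMap.prodMap (LinearMap.id : Pm →ₗ[K] Pm) (0 : Pp →ₗ[K] Pp)
/-- Projection of `Pm × Pp` onto the `Pp` factor. -/
def Ppos (K : Type*) [CommRing K] {Pm Pp : Type*} [AddCommGroup Pm] [AddCommGroup Pp]
    [Module K Pm] [Module K Pp] : Pm × Pp →ₗ[K] Pm × Pp :=
  LinearMap.prodMap (0 : Pm →ₗ[K] Pm) (LinearMap.id : Pp →ₗ[K] Pp)

lemma iot_Pneg (p : Pm × Pp) : iot E (Pneg K p) = E.em p.1 := by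
  simp [iot_apply, Pneg]

lemma iot_Ppos (p : Pm × Pp) : iot E (Ppos K p) = E.ep p.2 := by
  simp [iot_apply, Ppos]

lemma wpr_Pneg (ω : (Pm →ₗ[K] Pm) × (Pp →ₗ[K] Pp)) (p : Pm × Pp) :
    wpr ω (Pneg K p) = Pneg K (wpr ω p) := by simp [wpr, Pneg]

lemma wpr_Ppos (ω : (Pm →ₗ[K] Pm) × (Pp →ₗ[K] Pp)) (p : Pm × Pp) :
    wpr ω (Ppos K p) = Ppos K (wpr ω p) := by simp [wpr, Ppos]

lemma lie_iot_expand (p q : Pm × Pp) :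
    ⁅iot E p, iot E q⁆ = ⁅E.em p.1, E.em q.1⁆ + (⁅E.em p.1, E.ep q.2⁆ + ⁅E.ep p.2, E.em q.1⁆)
      + ⁅E.ep p.2, E.ep q.2⁆ := by
  rw [iot_apply, iot_apply, lie_add, add_lie, add_lie]
  abel

lemma fgpi_lie_iot_one (p q : Pm × Pp) : fgpi fg 1 ⁅iot E p, iot E q⁆ = 0 := by
  rw [lie_iot_expand, map_add, map_add, map_add,
    fgpi_of_mem_ne (lie_mm_mem E p.1 q.1) (by norm_num),
    fgpi_of_mem_ne (lie_mp_mem E p.1 q.2) (by norm_num),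
    fgpi_of_mem_ne (lie_pm_mem E p.2 q.1) (by norm_num),
    fgpi_of_mem_ne (lie_pp_mem E p.2 q.2) (by norm_num)]
  simp

lemma fgpi_lie_iot_negone (p q : Pm × Pp) : fgpi fg (-1) ⁅iot E p, iot E q⁆ = 0 := by
  rw [lie_iot_expand, map_add, map_add, map_add,
    fgpi_of_mem_ne (lie_mm_mem E p.1 q.1) (by norm_num),
    fgpi_of_mem_ne (lie_mp_mem E p.1 q.2) (by norm_num),
    fgpi_of_mem_ne (lie_pm_mem E p.2 q.1) (by norm_num),
    fgpi_of_mem_ne (lie_pp_mem E p.2 q.2) (by norm_num)]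
  simp

lemma fgpi_lie_iot_two (p q : Pm × Pp) :
    fgpi fg 2 ⁅iot E p, iot E q⁆ = ⁅iot E (Ppos K p), iot E (Ppos K q)⁆ := by
  rw [lie_iot_expand, map_add, map_add, map_add,
    fgpi_of_mem_ne (lie_mm_mem E p.1 q.1) (by norm_num),
    fgpi_of_mem_ne (lie_mp_mem E p.1 q.2) (by norm_num),
    fgpi_of_mem_ne (lie_pm_mem E p.2 q.1) (by norm_num),
    fgpi_of_mem (lie_pp_mem E p.2 q.2), iot_Ppos, iot_Ppos]
  simp

lemma fgpi_lie_iot_negtwo (p q : Pm × Pp) :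
    fgpi fg (-2) ⁅iot E p, iot E q⁆ = ⁅iot E (Pneg K p), iot E (Pneg K q)⁆ := by
  rw [lie_iot_expand, map_add, map_add, map_add,
    fgpi_of_mem (lie_mm_mem E p.1 q.1),
    fgpi_of_mem_ne (lie_mp_mem E p.1 q.2) (by norm_num),
    fgpi_of_mem_ne (lie_pm_mem E p.2 q.1) (by norm_num),
    fgpi_of_mem_ne (lie_pp_mem E p.2 q.2) (by norm_num), iot_Pneg, iot_Pneg]
  simp

lemma fgpi_lie_iot_zero (p q : Pm × Pp) :
    fgpi fg 0 ⁅iot E p, iot E q⁆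
      = ⁅iot E (Pneg K p), iot E (Ppos K q)⁆ + ⁅iot E (Ppos K p), iot E (Pneg K q)⁆ := by
  rw [lie_iot_expand, map_add, map_add, map_add,
    fgpi_of_mem_ne (lie_mm_mem E p.1 q.1) (by norm_num),
    fgpi_of_mem (lie_mp_mem E p.1 q.2),
    fgpi_of_mem (lie_pm_mem E p.2 q.1),
    fgpi_of_mem_ne (lie_pp_mem E p.2 q.2) (by norm_num),
    iot_Pneg, iot_Ppos, iot_Pneg, iot_Ppos]
  simp

/- Tensor-level versions. -/

lemma fgpi_brT_one (s : (Pm × Pp) ⊗[K] (Pm × Pp)) : fgpi fg 1 (brT E s) = 0 := by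
  have h : (fgpi fg 1) ∘ₗ brT E = 0 := TensorProduct.ext' fun p q => by
    simpa using fgpi_lie_iot_one E p q
  simpa using LinearMap.congr_fun h s

lemma fgpi_brT_negone (s : (Pm × Pp) ⊗[K] (Pm × Pp)) : fgpi fg (-1) (brT E s) = 0 := by
  have h : (fgpi fg (-1)) ∘ₗ brT E = 0 := TensorProduct.ext' fun p q => by
    simpa using fgpi_lie_iot_negone E p q
  simpa using LinearMap.congr_fun h s

lemma fgpi_brT_two (s : (Pm × Pp) ⊗[K] (Pm × Pp)) :
    fgpi fg 2 (brT E s) = brT E (TensorProduct.map (Ppos K) (Ppos K) s) := by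
  have h : (fgpi fg 2) ∘ₗ brT E = brT E ∘ₗ TensorProduct.map (Ppos K) (Ppos K) :=
    TensorProduct.ext' fun p q => by
      simpa using fgpi_lie_iot_two E p q
  simpa using LinearMap.congr_fun h s

lemma fgpi_brT_negtwo (s : (Pm × Pp) ⊗[K] (Pm × Pp)) :
    fgpi fg (-2) (brT E s) = brT E (TensorProduct.map (Pneg K) (Pneg K) s) := by
  have h : (fgpi fg (-2)) ∘ₗ brT E = brT E ∘ₗ TensorProduct.map (Pneg K) (Pneg K) :=
    TensorProduct.ext' fun p q => by
      simpa using fgpi_lie_iot_negtwo E p q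
  simpa using LinearMap.congr_fun h s

lemma fgpi_brT_zero (s : (Pm × Pp) ⊗[K] (Pm × Pp)) :
    fgpi fg 0 (brT E s)
      = brT E (TensorProduct.map (Pneg K) (Ppos K) s) + brT E (TensorProduct.map (Ppos K) (Pneg K) s) := by
  have h : (fgpi fg 0) ∘ₗ brT E
      = brT E ∘ₗ TensorProduct.map (Pneg K) (Ppos K) + brT E ∘ₗ TensorProduct.map (Ppos K) (Pneg K) :=
    TensorProduct.ext' fun p q => by
      simpa using fgpi_lie_iot_zero E p q
  simpa using LinearMap.congr_fun h s

variable (ω : (Pm →ₗ[K] Pm) × (Pp →ₗ[K] Pp))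

lemma fgpi_brT'_one (s : (Pm × Pp) ⊗[K] (Pm × Pp)) : fgpi fg 1 (brT' E ω s) = 0 := by
  have h : (fgpi fg 1) ∘ₗ brT' E ω = 0 := TensorProduct.ext' fun p q => by
    simpa using fgpi_lie_iot_one E (wpr ω p) q
  simpa using LinearMap.congr_fun h s

lemma fgpi_brT'_negone (s : (Pm × Pp) ⊗[K] (Pm × Pp)) : fgpi fg (-1) (brT' E ω s) = 0 := by
  have h : (fgpi fg (-1)) ∘ₗ brT' E ω = 0 := TensorProduct.ext' fun p q => by
    simpa using fgpi_lie_iot_negone E (wpr ω p) q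
  simpa using LinearMap.congr_fun h s

lemma fgpi_brT'_two (s : (Pm × Pp) ⊗[K] (Pm × Pp)) :
    fgpi fg 2 (brT' E ω s) = brT' E ω (TensorProduct.map (Ppos K) (Ppos K) s) := by
  have h : (fgpi fg 2) ∘ₗ brT' E ω = brT' E ω ∘ₗ TensorProduct.map (Ppos K) (Ppos K) :=
    TensorProduct.ext' fun p q => by
      have := fgpi_lie_iot_two E (wpr ω p) q
      rw [← wpr_Ppos] at this
      simpa using this
  simpa using LinearMap.congr_fun h s

lemma fgpi_brT'_negtwo (s : (Pm × Pp) ⊗[K] (Pm × Pp)) :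
    fgpi fg (-2) (brT' E ω s) = brT' E ω (TensorProduct.map (Pneg K) (Pneg K) s) := by
  have h : (fgpi fg (-2)) ∘ₗ brT' E ω = brT' E ω ∘ₗ TensorProduct.map (Pneg K) (Pneg K) :=
    TensorProduct.ext' fun p q => by
      have := fgpi_lie_iot_negtwo E (wpr ω p) q
      rw [← wpr_Pneg] at this
      simpa using this
  simpa using LinearMap.congr_fun h s

lemma fgpi_brT'_zero (s : (Pm × Pp) ⊗[K] (Pm × Pp)) :
    fgpi fg 0 (brT' E ω s)
      = brT' E ω (TensorProduct.map (Pneg K) (Ppos K) s) + brT' E ω (TensorProduct.map (Ppos K) (Pneg K) s) := by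
  have h : (fgpi fg 0) ∘ₗ brT' E ω
      = brT' E ω ∘ₗ TensorProduct.map (Pneg K) (Ppos K) + brT' E ω ∘ₗ TensorProduct.map (Ppos K) (Pneg K) :=
    TensorProduct.ext' fun p q => by
      have := fgpi_lie_iot_zero E (wpr ω p) q
      rw [← wpr_Pneg ω p, ← wpr_Ppos ω p] at this
      simpa using this
  simpa using LinearMap.congr_fun h s

end Statement2Aux6
section Statement2Aux7

open TensorProduct

variable {K : Type*} [CommRing K] {Pm Pp : Type*}
  [AddCommGroup Pm] [AddCommGroup Pp] [Module K Pm] [Module K Pp]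
  {KP : KantorPair K Pm Pp}
  {L : Type*} [LieRing L] [LieAlgebra K L] {fg : FiveGrading K L}
  (E : Envelops KP fg)

lemma bracket_prop_inner (ht : Tight K fg) (χ : Module.End K L) (u : L)
    (h1 : ∀ r, χ ⁅u, iot E r⁆ = ⁅χ u, iot E r⁆)
    (h2 : ∀ r t', χ ⁅u, ⁅iot E r, iot E t'⁆⁆ = ⁅χ u, ⁅iot E r, iot E t'⁆⁆) :
    ∀ v : L, χ ⁅u, v⁆ = ⁅χ u, v⁆ := by
  intro v
  have hv : v ∈ Tsub fg ⊔ brkSpan K (Tsub fg) (Tsub fg) := by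
    rw [top_eq_T_sup_brk ht]; trivial
  obtain ⟨t, htT, s, hs, rfl⟩ := Submodule.mem_sup.1 hv
  obtain ⟨r, rfl⟩ := (mem_T_iff E).1 htT
  rw [lie_add, map_add, lie_add, h1 r]
  clear hv
  congr 1
  induction hs using Submodule.span_induction with
  | mem w hw =>
      obtain ⟨x, hx, y, hy, rfl⟩ := hw
      obtain ⟨r', rfl⟩ := (mem_T_iff E).1 hx
      obtain ⟨t', rfl⟩ := (mem_T_iff E).1 hy
      exact h2 r' t'
  | zero => simp
  | add a b ha hb iha ihb => rw [lie_add, map_add, iha, ihb, lie_add]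
  | smul a x' hx' ihx => rw [lie_smul, map_smul, ihx, lie_smul]

section main

variable {ω : (Pm →ₗ[K] Pm) × (Pp →ₗ[K] Pp)} (hc : KP.InCentroid ω.1 ω.2)
  (ht : Tight K fg)

/-- Uniform graded-component comparison for `brT` and `brT'`. -/
lemma fgpi_even_brT (j : ℤ) (hj : j = -2 ∨ j = 0 ∨ j = 2)
    (s : (Pm × Pp) ⊗[K] (Pm × Pp)) :
    ∃ s', fgpi fg j (brT E s) = brT E s' ∧ fgpi fg j (brT' E ω s) = brT' E ω s' := by
  rcases hj with rfl | rfl | rfl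
  · exact ⟨TensorProduct.map (Pneg K) (Pneg K) s, fgpi_brT_negtwo E s, fgpi_brT'_negtwo E ω s⟩
  · exact ⟨TensorProduct.map (Pneg K) (Ppos K) s + TensorProduct.map (Ppos K) (Pneg K) s,
      by rw [fgpi_brT_zero, map_add], by rw [fgpi_brT'_zero, map_add]⟩
  · exact ⟨TensorProduct.map (Ppos K) (Ppos K) s, fgpi_brT_two E s, fgpi_brT'_two E ω s⟩

include hc ht in
lemma brT'_mem_of_brT_mem {s : (Pm × Pp) ⊗[K] (Pm × Pp)} {i : ℤ}
    (hi : brT E s ∈ fg.g i) : brT' E ω s ∈ fg.g i := by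
  refine mem_of_fgpi (fun j hj => ?_)
  by_cases hj1 : j = 1
  · subst hj1; exact fgpi_brT'_one E ω s
  by_cases hjm1 : j = -1
  · subst hjm1; exact fgpi_brT'_negone E ω s
  by_cases h2 : 2 < |j|
  · exact fgpi_vanish h2 _
  · have hb := abs_le.1 (not_lt.1 h2)
    have hj' : j = -2 ∨ j = 0 ∨ j = 2 := by omega
    obtain ⟨s', h1, h2'⟩ := fgpi_even_brT E (ω := ω) j hj' s
    rw [h2']
    refine br_zero E hc ht ?_
    rw [← h1, fgpi_of_mem_ne hi (Ne.symm hj)]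

include hc ht in
lemma exists_graded_centroid_lift :
    ∃ χ : Module.End K L, χ ∈ GradedCentroid K fg ∧ RestrRel E χ ω := by
  classical
  set Φ : ((Pm × Pp) × ((Pm × Pp) ⊗[K] (Pm × Pp))) →ₗ[K] L :=
    iot E ∘ₗ LinearMap.fst K _ _ + brT E ∘ₗ LinearMap.snd K _ _ with hΦ
  set Ψ : ((Pm × Pp) × ((Pm × Pp) ⊗[K] (Pm × Pp))) →ₗ[K] L :=
    (iot E ∘ₗ wpr ω) ∘ₗ LinearMap.fst K _ _ + brT' E ω ∘ₗ LinearMap.snd K _ _ with hΨ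
  have hΦ_apply : ∀ m, Φ m = iot E m.1 + brT E m.2 := fun m => rfl
  have hΨ_apply : ∀ m, Ψ m = iot E (wpr ω m.1) + brT' E ω m.2 := fun m => rfl
  -- surjectivity
  have hrange : LinearMap.range Φ = ⊤ := by
    rw [eq_top_iff, ← top_eq_T_sup_brk ht]
    refine sup_le ?_ ?_
    · intro t htT
      obtain ⟨p, rfl⟩ := (mem_T_iff E).1 htT
      exact ⟨(p, 0), by simp [hΦ_apply]⟩
    · refine Submodule.span_le.2 ?_
      rintro w ⟨x, hx, y, hy, rfl⟩
      obtain ⟨p, rfl⟩ := (mem_T_iff E).1 hx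
      obtain ⟨q, rfl⟩ := (mem_T_iff E).1 hy
      exact ⟨(0, p ⊗ₜ q), by simp [hΦ_apply]⟩
  have hsurj : Function.Surjective Φ := LinearMap.range_eq_top.1 hrange
  -- kernel inclusion
  have hkerp : ∀ m : (Pm × Pp) × ((Pm × Pp) ⊗[K] (Pm × Pp)),
      Φ m = 0 → m.1 = 0 ∧ brT E m.2 = 0 := by
    intro ⟨p, s⟩ hm
    rw [hΦ_apply] at hm
    have hm1 : fgpi fg (-1) (iot E p + brT E s) = E.em p.1 := by
      rw [map_add, fgpi_brT_negone, add_zero, iot_apply, map_add,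
        fgpi_of_mem (em_mem E p.1), fgpi_of_mem_ne (ep_mem E p.2) (by norm_num), add_zero]
    have hm2 : fgpi fg 1 (iot E p + brT E s) = E.ep p.2 := by
      rw [map_add, fgpi_brT_one, add_zero, iot_apply, map_add,
        fgpi_of_mem (ep_mem E p.2), fgpi_of_mem_ne (em_mem E p.1) (by norm_num), zero_add]
    rw [hm, map_zero] at hm1 hm2
    have hp1 : p.1 = 0 := E.inj_m (by simpa using hm1.symm)
    have hp2 : p.2 = 0 := E.inj_p (by simpa using hm2.symm)
    have hp : p = 0 := Prod.ext hp1 hp2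
    refine ⟨hp, ?_⟩
    rw [hp] at hm
    simpa using hm
  have hker : LinearMap.ker Φ ≤ LinearMap.ker Ψ := by
    intro m hm
    rw [LinearMap.mem_ker] at hm ⊢
    obtain ⟨hp, hbs⟩ := hkerp m hm
    rw [hΨ_apply, hp, map_zero, map_zero, zero_add]
    exact br_zero E hc ht hbs
  -- construction of χ
  set e0 := (LinearMap.ker Φ).liftQ Φ le_rfl with he0
  have he0inj : Function.Injective e0 := by
    rw [← LinearMap.ker_eq_bot]
    exact Submodule.ker_liftQ_eq_bot _ _ _ le_rfl
  have he0surj : Function.Surjective e0 := by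
    rw [← LinearMap.range_eq_top, Submodule.range_liftQ, hrange]
  set e := LinearEquiv.ofBijective e0 ⟨he0inj, he0surj⟩ with he
  set χ : Module.End K L := ((LinearMap.ker Φ).liftQ Ψ hker) ∘ₗ (e.symm : L →ₗ[K] _) with hχ
  have key : ∀ m, χ (Φ m) = Ψ m := by
    intro m
    have h1 : e ((LinearMap.ker Φ).mkQ m) = Φ m := by
      show e0 ((LinearMap.ker Φ).mkQ m) = Φ m
      exact LinearMap.congr_fun ((LinearMap.ker Φ).liftQ_mkQ Φ le_rfl) m
    have h2 : e.symm (Φ m) = (LinearMap.ker Φ).mkQ m := by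
      rw [← h1, LinearEquiv.symm_apply_apply]
    rw [hχ, LinearMap.comp_apply, LinearEquiv.coe_coe, h2]
    exact LinearMap.congr_fun ((LinearMap.ker Φ).liftQ_mkQ Ψ hker) m
  have hχι : ∀ p, χ (iot E p) = iot E (wpr ω p) := by
    intro p
    have := key (p, 0)
    simpa [hΦ_apply, hΨ_apply] using this
  have hχbr : ∀ s, χ (brT E s) = brT' E ω s := by
    intro s
    have := key (0, s)
    simpa [hΦ_apply, hΨ_apply] using this
  have hbr_pure : ∀ p q, χ ⁅iot E p, iot E q⁆ = ⁅iot E (wpr ω p), iot E q⁆ := by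
    intro p q
    have := hχbr (p ⊗ₜ q)
    simpa using this
  -- the four basic cases
  have c1 : ∀ p q, χ ⁅iot E p, iot E q⁆ = ⁅χ (iot E p), iot E q⁆ := by
    intro p q
    rw [hbr_pure, hχι]
  have c2 : ∀ p q r, χ ⁅iot E p, ⁅iot E q, iot E r⁆⁆ = ⁅χ (iot E p), ⁅iot E q, iot E r⁆⁆ := by
    intro p q r
    have h0 : ⁅iot E p, ⁅iot E q, iot E r⁆⁆ = - iot E (trip KP q r p) := by
      rw [← trip_eq, ← lie_skew]
    have h0' : ⁅iot E (wpr ω p), ⁅iot E q, iot E r⁆⁆ = - iot E (trip KP q r (wpr ω p)) := by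
      rw [← trip_eq, ← lie_skew]
    rw [h0, map_neg, hχι (trip KP q r p), ← trip_w3 hc, hχι p, h0']
  have c3 : ∀ p q r, χ ⁅⁅iot E p, iot E q⁆, iot E r⁆ = ⁅χ ⁅iot E p, iot E q⁆, iot E r⁆ := by
    intro p q r
    rw [trip_eq, hχι, ← trip_w1 hc, ← trip_eq, hbr_pure]
  have c4 : ∀ p q r t', χ ⁅⁅iot E p, iot E q⁆, ⁅iot E r, iot E t'⁆⁆
      = ⁅χ ⁅iot E p, iot E q⁆, ⁅iot E r, iot E t'⁆⁆ := by
    intro p q r t'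
    have hL : ∀ p', ⁅⁅iot E p', iot E q⁆, ⁅iot E r, iot E t'⁆⁆
        = ⁅iot E (trip KP p' q r), iot E t'⁆ + ⁅iot E r, iot E (trip KP p' q t')⁆ := by
      intro p'
      rw [leibniz_lie ⁅iot E p', iot E q⁆ (iot E r) (iot E t'), trip_eq, trip_eq]
    rw [hL p, map_add, hbr_pure]
    have h2 : χ ⁅iot E r, iot E (trip KP p q t')⁆ = ⁅iot E r, iot E (trip KP (wpr ω p) q t')⁆ := by
      rw [hbr_pure, lemC E hc ht, ← trip_w1 hc]
    rw [h2, hbr_pure, hL (wpr ω p), trip_w1 hc, ← trip_w1 hc]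
  -- bracket property
  have hbrk : ∀ u v : L, χ ⁅u, v⁆ = ⁅χ u, v⁆ := by
    intro u v
    have hu : u ∈ Tsub fg ⊔ brkSpan K (Tsub fg) (Tsub fg) := by
      rw [top_eq_T_sup_brk ht]; trivial
    obtain ⟨t, htT, s, hs, rfl⟩ := Submodule.mem_sup.1 hu
    clear hu
    obtain ⟨p, rfl⟩ := (mem_T_iff E).1 htT
    have hsv : ∀ v, χ ⁅s, v⁆ = ⁅χ s, v⁆ := by
      clear v
      induction hs using Submodule.span_induction with
      | mem w hw =>
          obtain ⟨x, hx, y, hy, rfl⟩ := hw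
          obtain ⟨q, rfl⟩ := (mem_T_iff E).1 hx
          obtain ⟨r, rfl⟩ := (mem_T_iff E).1 hy
          exact bracket_prop_inner E ht χ _ (fun r' => c3 q r r') (fun r' t' => c4 q r r' t')
      | zero => intro v; simp
      | add a b ha hb iha ihb => intro v; rw [add_lie, map_add, map_add, iha, ihb, add_lie]
      | smul a x' hx' ihx => intro v; rw [smul_lie, map_smul, map_smul, ihx, smul_lie]
    have htv : ∀ v, χ ⁅iot E p, v⁆ = ⁅χ (iot E p), v⁆ :=
      bracket_prop_inner E ht χ _ (fun r => c1 p r) (fun r t' => c2 p r t')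
    rw [add_lie, map_add, map_add, htv v, hsv v, add_lie]
  -- grading preservation
  have hgrade : ∀ (i : ℤ) (x : L), x ∈ fg.g i → χ x ∈ fg.g i := by
    intro i x hx
    obtain ⟨m, rfl⟩ := hsurj x
    obtain ⟨p, s⟩ := m
    rw [hΦ_apply] at hx ⊢
    have hχx : χ (iot E p + brT E s) = iot E (wpr ω p) + brT' E ω s := by
      rw [map_add, hχι, hχbr]
    by_cases h2 : 2 < |i|
    · have hx0 : iot E p + brT E s = 0 := by
        rw [fg.vanish i h2, Submodule.mem_bot] at hx
        exact hx
      rw [hx0, map_zero]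
      exact Submodule.zero_mem _
    obtain ⟨hb1, hb2⟩ := abs_le.1 (not_lt.1 h2)
    have hm1 : fgpi fg (-1) (iot E p + brT E s) = E.em p.1 := by
      rw [map_add, fgpi_brT_negone, add_zero, iot_apply, map_add,
        fgpi_of_mem (em_mem E p.1), fgpi_of_mem_ne (ep_mem E p.2) (by norm_num), add_zero]
    have hm2 : fgpi fg 1 (iot E p + brT E s) = E.ep p.2 := by
      rw [map_add, fgpi_brT_one, add_zero, iot_apply, map_add,
        fgpi_of_mem (ep_mem E p.2), fgpi_of_mem_ne (em_mem E p.1) (by norm_num), zero_add]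
    interval_cases i
    · -- i = -2
      have hp1 : p.1 = 0 := E.inj_m (by
        rw [fgpi_of_mem_ne hx (by norm_num)] at hm1
        simpa using hm1.symm)
      have hp2 : p.2 = 0 := E.inj_p (by
        rw [fgpi_of_mem_ne hx (by norm_num)] at hm2
        simpa using hm2.symm)
      have hp : p = 0 := Prod.ext hp1 hp2
      rw [hχx, hp, map_zero, map_zero, zero_add]
      rw [hp, map_zero, zero_add] at hx
      exact brT'_mem_of_brT_mem E hc ht hx
    · -- i = -1
      have h1 : E.em p.1 = iot E p + brT E s := by rw [← hm1, fgpi_of_mem hx]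
      have hp2 : p.2 = 0 := E.inj_p (by
        rw [fgpi_of_mem_ne hx (by norm_num)] at hm2
        simpa using hm2.symm)
      have hbs : brT E s = 0 := by
        have : iot E p = E.em p.1 := by rw [iot_apply, hp2, map_zero, add_zero]
        rw [this] at h1
        exact left_eq_add.1 h1
      rw [hχx, br_zero E hc ht hbs, add_zero, iot_apply, wpr, LinearMap.prodMap_apply,
        hp2, map_zero, map_zero, add_zero]
      exact em_mem E _
    · -- i = 0
      have hp1 : p.1 = 0 := E.inj_m (by
        rw [fgpi_of_mem_ne hx (by norm_num)] at hm1
        simpa using hm1.symm)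
      have hp2 : p.2 = 0 := E.inj_p (by
        rw [fgpi_of_mem_ne hx (by norm_num)] at hm2
        simpa using hm2.symm)
      have hp : p = 0 := Prod.ext hp1 hp2
      rw [hχx, hp, map_zero, map_zero, zero_add]
      rw [hp, map_zero, zero_add] at hx
      exact brT'_mem_of_brT_mem E hc ht hx
    · -- i = 1
      have h1 : E.ep p.2 = iot E p + brT E s := by rw [← hm2, fgpi_of_mem hx]
      have hp1 : p.1 = 0 := E.inj_m (by
        rw [fgpi_of_mem_ne hx (by norm_num)] at hm1
        simpa using hm1.symm)
      have hbs : brT E s = 0 := by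
        have : iot E p = E.ep p.2 := by rw [iot_apply, hp1, map_zero, zero_add]
        rw [this] at h1
        exact left_eq_add.1 h1
      rw [hχx, br_zero E hc ht hbs, add_zero, iot_apply, wpr, LinearMap.prodMap_apply,
        hp1, map_zero, map_zero, zero_add]
      exact ep_mem E _
    · -- i = 2
      have hp1 : p.1 = 0 := E.inj_m (by
        rw [fgpi_of_mem_ne hx (by norm_num)] at hm1
        simpa using hm1.symm)
      have hp2 : p.2 = 0 := E.inj_p (by
        rw [fgpi_of_mem_ne hx (by norm_num)] at hm2
        simpa using hm2.symm)
      have hp : p = 0 := Prod.ext hp1 hp2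
      rw [hχx, hp, map_zero, map_zero, zero_add]
      rw [hp, map_zero, zero_add] at hx
      exact brT'_mem_of_brT_mem E hc ht hx
  refine ⟨χ, ⟨hbrk, hgrade⟩, ?_, ?_⟩
  · intro x
    have := hχι (x, 0)
    simpa [iot_apply, wpr] using this
  · intro y
    have := hχι (0, y)
    simpa [iot_apply, wpr] using this

end main

end Statement2Aux7
section Statement2Aux8

variable {K : Type*} [CommRing K] {Pm Pp : Type*}
  [AddCommGroup Pm] [AddCommGroup Pp] [Module K Pm] [Module K Pp]
  {KP : KantorPair K Pm Pp}
  {L : Type*} [LieRing L] [LieAlgebra K L] {fg : FiveGrading K L}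
  (E : Envelops KP fg)

lemma chi_unique (ht : Tight K fg) {χ χ' : Module.End K L}
    (hb : ∀ u v : L, χ ⁅u, v⁆ = ⁅χ u, v⁆) (hb' : ∀ u v : L, χ' ⁅u, v⁆ = ⁅χ' u, v⁆)
    (h : ∀ p : Pm × Pp, χ (iot E p) = χ' (iot E p)) : χ = χ' := by
  refine LinearMap.ext fun u => ?_
  have hu : u ∈ Tsub fg ⊔ brkSpan K (Tsub fg) (Tsub fg) := by
    rw [top_eq_T_sup_brk ht]; trivial
  obtain ⟨t, htT, s, hs, rfl⟩ := Submodule.mem_sup.1 hu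
  clear hu
  obtain ⟨p, rfl⟩ := (mem_T_iff E).1 htT
  rw [map_add, map_add, h p]
  congr 1
  induction hs using Submodule.span_induction with
  | mem w hw =>
      obtain ⟨x, hx, y, hy, rfl⟩ := hw
      obtain ⟨q, rfl⟩ := (mem_T_iff E).1 hx
      rw [hb, hb', h q]
  | zero => simp
  | add a b ha hb iha ihb => rw [map_add, map_add, iha, ihb]
  | smul a x' hx' ihx => rw [map_smul, map_smul, ihx]

/-- `Pm ≃ L₋₁`. -/
noncomputable def muM : Pm ≃ₗ[K] (fg.g (-1)) :=
  (LinearEquiv.ofInjective E.em E.inj_m).trans (LinearEquiv.ofEq _ _ E.range_m)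

/-- `Pp ≃ L₁`. -/
noncomputable def muP : Pp ≃ₗ[K] (fg.g 1) :=
  (LinearEquiv.ofInjective E.ep E.inj_p).trans (LinearEquiv.ofEq _ _ E.range_p)

lemma muM_coe (x : Pm) : ((muM E x : L)) = E.em x := rfl
lemma muP_coe (y : Pp) : ((muP E y : L)) = E.ep y := rfl

lemma em_muM_symm (w : fg.g (-1)) : E.em ((muM E).symm w) = (w : L) := by
  conv_rhs => rw [← (muM E).apply_symm_apply w]
  rw [muM_coe]

lemma ep_muP_symm (w : fg.g 1) : E.ep ((muP E).symm w) = (w : L) := by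
  conv_rhs => rw [← (muP E).apply_symm_apply w]
  rw [muP_coe]

lemma restr_exists (χ : Module.End K L) (hχ : χ ∈ GradedCentroid K fg) :
    ∃ ω : (Pm →ₗ[K] Pm) × (Pp →ₗ[K] Pp), KP.InCentroid ω.1 ω.2 ∧ RestrRel E χ ω := by
  obtain ⟨hb, hg⟩ := hχ
  set ωm : Pm →ₗ[K] Pm := (muM E).symm.toLinearMap ∘ₗ
    LinearMap.codRestrict (fg.g (-1)) (χ ∘ₗ E.em) (fun x => hg (-1) _ (em_mem E x)) with hωm
  set ωp : Pp →ₗ[K] Pp := (muP E).symm.toLinearMap ∘ₗ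
    LinearMap.codRestrict (fg.g 1) (χ ∘ₗ E.ep) (fun y => hg 1 _ (ep_mem E y)) with hωp
  have hrm : ∀ x, χ (E.em x) = E.em (ωm x) := by
    intro x
    rw [hωm, LinearMap.comp_apply, LinearEquiv.coe_coe, em_muM_symm]
    rfl
  have hrp : ∀ y, χ (E.ep y) = E.ep (ωp y) := by
    intro y
    rw [hωp, LinearMap.comp_apply, LinearEquiv.coe_coe, ep_muP_symm]
    rfl
  have hb2 : ∀ u v : L, χ ⁅u, v⁆ = ⁅u, χ v⁆ := by
    intro u v
    rw [← lie_skew u (χ v), ← lie_skew u v, map_neg, hb]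
  refine ⟨(ωm, ωp), ⟨?_, ?_⟩, hrm, hrp⟩
  · intro x y z
    refine ⟨E.inj_m ?_, E.inj_m ?_, E.inj_m ?_⟩
    · rw [← hrm, E.compat_m, E.compat_m, hb, hb, hrm]
    · rw [← hrm, E.compat_m, E.compat_m, hb, hb2, hrp]
    · rw [← hrm, E.compat_m, E.compat_m, hb2, hrm]
  · intro x y z
    refine ⟨E.inj_p ?_, E.inj_p ?_, E.inj_p ?_⟩
    · rw [← hrp, E.compat_p, E.compat_p, hb, hb, hrp]
    · rw [← hrp, E.compat_p, E.compat_p, hb, hb2, hrm]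
    · rw [← hrp, E.compat_p, E.compat_p, hb2, hrp]

end Statement2Aux8
/-- For a Kantor pair `P`, the restriction map
`χ ↦ (χ|_{P⁻}, χ|_{P⁺})` is an isomorphism of unital associative `K`-algebras from the
graded centroid `C(𝔎(P), ℤ)` onto the centroid `C(P)`.  (`𝔎(P)` is represented by an
arbitrary 5-graded Lie algebra `L` tightly enveloping `P`.)  Bijectivity is expressed by
the two `∃!` clauses, and the algebra-homomorphism property by the compatibility of the
restriction relation with identity, composition, addition and scalar multiplication. -/
theorem statement2 {K : Type*} [CommRing K] (h6 : IsUnit (6 : K))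
    {Pm Pp : Type*} [AddCommGroup Pm] [AddCommGroup Pp] [Module K Pm] [Module K Pp]
    (KP : KantorPair K Pm Pp)
    {L : Type*} [LieRing L] [LieAlgebra K L] (fg : FiveGrading K L)
    (E : Envelops KP fg) (ht : Tight K fg) :
    (∀ χ ∈ GradedCentroid K fg, ∃! ω : (Pm →ₗ[K] Pm) × (Pp →ₗ[K] Pp),
        KP.InCentroid ω.1 ω.2 ∧ RestrRel E χ ω) ∧
    (∀ ω : (Pm →ₗ[K] Pm) × (Pp →ₗ[K] Pp), KP.InCentroid ω.1 ω.2 →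
        ∃! χ : Module.End K L, χ ∈ GradedCentroid K fg ∧ RestrRel E χ ω) ∧
    RestrRel E 1 (LinearMap.id, LinearMap.id) ∧
    (∀ (χ χ' : Module.End K L) (ω ω' : (Pm →ₗ[K] Pm) × (Pp →ₗ[K] Pp)),
      RestrRel E χ ω → RestrRel E χ' ω' →
        RestrRel E (χ * χ') (ω.1 ∘ₗ ω'.1, ω.2 ∘ₗ ω'.2) ∧
        RestrRel E (χ + χ') (ω.1 + ω'.1, ω.2 + ω'.2)) ∧
    (∀ (a : K) (χ : Module.End K L) (ω : (Pm →ₗ[K] Pm) × (Pp →ₗ[K] Pp)),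
      RestrRel E χ ω → RestrRel E (a • χ) (a • ω.1, a • ω.2)) := by
  refine ⟨?_, ?_, ?_, ?_, ?_⟩
  · -- restriction exists and is unique
    intro χ hχ
    obtain ⟨ω, hω, hr⟩ := restr_exists E χ hχ
    refine ⟨ω, ⟨hω, hr⟩, ?_⟩
    rintro ω' ⟨hω', hr'⟩
    refine Prod.ext ?_ ?_
    · refine LinearMap.ext fun x => E.inj_m ?_
      rw [← hr'.1 x, hr.1 x]
    · refine LinearMap.ext fun y => E.inj_p ?_
      rw [← hr'.2 y, hr.2 y]
  · -- lifting exists and is unique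
    intro ω hω
    obtain ⟨χ, hχg, hχr⟩ := exists_graded_centroid_lift E hω ht
    refine ⟨χ, ⟨hχg, hχr⟩, ?_⟩
    rintro χ' ⟨hχ'g, hχ'r⟩
    refine chi_unique E ht hχ'g.1 hχg.1 fun p => ?_
    rw [iot_apply, map_add, map_add, hχ'r.1, hχ'r.2, hχr.1, hχr.2]
  · exact ⟨fun x => rfl, fun y => rfl⟩
  · intro χ χ' ω ω' h h'
    constructor
    · exact ⟨fun x => by
        simp only [Module.End.mul_apply, h'.1 x, h.1 (ω'.1 x), LinearMap.comp_apply],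
      fun y => by
        simp only [Module.End.mul_apply, h'.2 y, h.2 (ω'.2 y), LinearMap.comp_apply]⟩
    · exact ⟨fun x => by
        simp only [LinearMap.add_apply, h.1 x, h'.1 x, map_add],
      fun y => by
        simp only [LinearMap.add_apply, h.2 y, h'.2 y, map_add]⟩
  · intro a χ ω h
    exact ⟨fun x => by simp only [LinearMap.smul_apply, h.1 x, map_smul],
      fun y => by simp only [LinearMap.smul_apply, h.2 y, map_smul]⟩
end
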